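/- (Main theorem, L = 1 reformulation) For any fixed A and elements B₁,...,B₆ of an associative ring, Σ_{τ∈S₆} sgn(τ) [[A [B_{τ(1)} B_{τ(2)} B_{τ(3)}] B_{τ(4)}] B_{τ(5)} B_{τ(6)}] = Σ_{τ∈S₆} sgn(τ) [[A B_{τ(1)} B_{τ(2)}] [B_{τ(3)} B_{τ(4)} B_{τ(5)}] B_{τ(6)}]. -/
import Mathlib

def nambu {R : Type*} [Ring R] {n : ℕ} (f : Fin n → R) : R :=
  ∑ σ : Equiv.Perm (Fin n), (Equiv.Perm.sign σ : ℤ) • (List.ofFn (f ∘ σ)).prod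

private def p3 (a b c a' b' c' : Fin 3) (h1 : Function.LeftInverse ![a',b',c'] ![a,b,c])
    (h2 : Function.RightInverse ![a',b',c'] ![a,b,c]) : Equiv.Perm (Fin 3) :=
  ⟨![a,b,c], ![a',b',c'], h1, h2⟩

private lemma nambu3 {R : Type*} [Ring R] (x y z : R) :
    nambu ![x,y,z] = x*y*z - x*z*y - y*x*z + y*z*x + z*x*y - z*y*x := by
  have huniv : (Finset.univ : Finset (Equiv.Perm (Fin 3))) =
      {p3 0 1 2 0 1 2 (by decide) (by decide), p3 0 2 1 0 2 1 (by decide) (by decide),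
       p3 1 0 2 1 0 2 (by decide) (by decide), p3 1 2 0 2 0 1 (by decide) (by decide),
       p3 2 0 1 1 2 0 (by decide) (by decide), p3 2 1 0 2 1 0 (by decide) (by decide)} := by
    decide
  rw [nambu, huniv, Finset.sum_insert (by decide), Finset.sum_insert (by decide),
    Finset.sum_insert (by decide), Finset.sum_insert (by decide),
    Finset.sum_insert (by decide), Finset.sum_singleton]
  rw [show ∀ h1 h2, (Equiv.Perm.sign (p3 0 1 2 0 1 2 h1 h2) : ℤ) = 1 from by decide,
      show ∀ h1 h2, (Equiv.Perm.sign (p3 0 2 1 0 2 1 h1 h2) : ℤ) = -1 from by decide,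
      show ∀ h1 h2, (Equiv.Perm.sign (p3 1 0 2 1 0 2 h1 h2) : ℤ) = -1 from by decide,
      show ∀ h1 h2, (Equiv.Perm.sign (p3 1 2 0 2 0 1 h1 h2) : ℤ) = 1 from by decide,
      show ∀ h1 h2, (Equiv.Perm.sign (p3 2 0 1 1 2 0 h1 h2) : ℤ) = 1 from by decide,
      show ∀ h1 h2, (Equiv.Perm.sign (p3 2 1 0 2 1 0 h1 h2) : ℤ) = -1 from by decide]
  simp only [p3, List.ofFn_succ, List.ofFn_zero, Function.comp_apply, Equiv.coe_fn_mk,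
    List.prod_cons, List.prod_nil, one_smul, neg_smul, mul_one, Matrix.cons_val_zero,
    Matrix.cons_val_one, Matrix.head_cons]
  simp only [neg_one_zsmul, mul_assoc]
  abel

private lemma alt_comp {R : Type*} [Ring R] (σ : Equiv.Perm (Fin 6)) (g : (Fin 6 → Fin 6) → R) :
    ∑ τ : Equiv.Perm (Fin 6), (Equiv.Perm.sign τ : ℤ) • g (⇑τ ∘ ⇑σ) =
      (Equiv.Perm.sign σ : ℤ) • ∑ τ : Equiv.Perm (Fin 6), (Equiv.Perm.sign τ : ℤ) • g ⇑τ := by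
  rw [Finset.smul_sum]
  apply Fintype.sum_equiv (Equiv.mulRight σ)
  intro τ
  have hc : ⇑(τ * σ) = ⇑τ ∘ ⇑σ := rfl
  rw [Equiv.coe_mulRight, smul_smul, hc, Equiv.Perm.sign_mul]
  push_cast
  rw [show ((Equiv.Perm.sign σ : ℤ) * ((Equiv.Perm.sign τ : ℤ) * (Equiv.Perm.sign σ : ℤ)))
      = (Equiv.Perm.sign τ : ℤ) * ((Equiv.Perm.sign σ : ℤ) * (Equiv.Perm.sign σ : ℤ)) from by ring,
    ← Units.val_mul, ← pow_two]
  simp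

private def W0 {R : Type*} [Ring R] (A : R) (B : Fin 6 → R) (v : Fin 6 → Fin 6) : R :=
  A * B (v 0) * B (v 1) * B (v 2) * B (v 3) * B (v 4) * B (v 5)

private def W1 {R : Type*} [Ring R] (A : R) (B : Fin 6 → R) (v : Fin 6 → Fin 6) : R :=
  B (v 0) * A * B (v 1) * B (v 2) * B (v 3) * B (v 4) * B (v 5)

private def W2 {R : Type*} [Ring R] (A : R) (B : Fin 6 → R) (v : Fin 6 → Fin 6) : R :=
  B (v 0) * B (v 1) * A * B (v 2) * B (v 3) * B (v 4) * B (v 5)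

private def W3 {R : Type*} [Ring R] (A : R) (B : Fin 6 → R) (v : Fin 6 → Fin 6) : R :=
  B (v 0) * B (v 1) * B (v 2) * A * B (v 3) * B (v 4) * B (v 5)

private def W4 {R : Type*} [Ring R] (A : R) (B : Fin 6 → R) (v : Fin 6 → Fin 6) : R :=
  B (v 0) * B (v 1) * B (v 2) * B (v 3) * A * B (v 4) * B (v 5)

private def W5 {R : Type*} [Ring R] (A : R) (B : Fin 6 → R) (v : Fin 6 → Fin 6) : R :=
  B (v 0) * B (v 1) * B (v 2) * B (v 3) * B (v 4) * A * B (v 5)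

private def W6 {R : Type*} [Ring R] (A : R) (B : Fin 6 → R) (v : Fin 6 → Fin 6) : R :=
  B (v 0) * B (v 1) * B (v 2) * B (v 3) * B (v 4) * B (v 5) * A

private def sg0 : Equiv.Perm (Fin 6) := ⟨![0,1,2,3,4,5], ![0,1,2,3,4,5], by decide, by decide⟩
private lemma sg0_a0 : sg0 0 = 0 := rfl
private lemma sg0_a1 : sg0 1 = 1 := rfl
private lemma sg0_a2 : sg0 2 = 2 := rfl
private lemma sg0_a3 : sg0 3 = 3 := rfl
private lemma sg0_a4 : sg0 4 = 4 := rfl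
private lemma sg0_a5 : sg0 5 = 5 := rfl
private lemma sg0_sign : (Equiv.Perm.sign sg0 : ℤ) = 1 := by decide
private def sg1 : Equiv.Perm (Fin 6) := ⟨![0,2,1,3,4,5], ![0,2,1,3,4,5], by decide, by decide⟩
private lemma sg1_a0 : sg1 0 = 0 := rfl
private lemma sg1_a1 : sg1 1 = 2 := rfl
private lemma sg1_a2 : sg1 2 = 1 := rfl
private lemma sg1_a3 : sg1 3 = 3 := rfl
private lemma sg1_a4 : sg1 4 = 4 := rfl
private lemma sg1_a5 : sg1 5 = 5 := rfl
private lemma sg1_sign : (Equiv.Perm.sign sg1 : ℤ) = -1 := by decide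
private def sg2 : Equiv.Perm (Fin 6) := ⟨![1,0,2,3,4,5], ![1,0,2,3,4,5], by decide, by decide⟩
private lemma sg2_a0 : sg2 0 = 1 := rfl
private lemma sg2_a1 : sg2 1 = 0 := rfl
private lemma sg2_a2 : sg2 2 = 2 := rfl
private lemma sg2_a3 : sg2 3 = 3 := rfl
private lemma sg2_a4 : sg2 4 = 4 := rfl
private lemma sg2_a5 : sg2 5 = 5 := rfl
private lemma sg2_sign : (Equiv.Perm.sign sg2 : ℤ) = -1 := by decide
private def sg3 : Equiv.Perm (Fin 6) := ⟨![1,2,0,3,4,5], ![2,0,1,3,4,5], by decide, by decide⟩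
private lemma sg3_a0 : sg3 0 = 1 := rfl
private lemma sg3_a1 : sg3 1 = 2 := rfl
private lemma sg3_a2 : sg3 2 = 0 := rfl
private lemma sg3_a3 : sg3 3 = 3 := rfl
private lemma sg3_a4 : sg3 4 = 4 := rfl
private lemma sg3_a5 : sg3 5 = 5 := rfl
private lemma sg3_sign : (Equiv.Perm.sign sg3 : ℤ) = 1 := by decide
private def sg4 : Equiv.Perm (Fin 6) := ⟨![2,0,1,3,4,5], ![1,2,0,3,4,5], by decide, by decide⟩
private lemma sg4_a0 : sg4 0 = 2 := rfl
private lemma sg4_a1 : sg4 1 = 0 := rfl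
private lemma sg4_a2 : sg4 2 = 1 := rfl
private lemma sg4_a3 : sg4 3 = 3 := rfl
private lemma sg4_a4 : sg4 4 = 4 := rfl
private lemma sg4_a5 : sg4 5 = 5 := rfl
private lemma sg4_sign : (Equiv.Perm.sign sg4 : ℤ) = 1 := by decide
private def sg5 : Equiv.Perm (Fin 6) := ⟨![2,1,0,3,4,5], ![2,1,0,3,4,5], by decide, by decide⟩
private lemma sg5_a0 : sg5 0 = 2 := rfl
private lemma sg5_a1 : sg5 1 = 1 := rfl
private lemma sg5_a2 : sg5 2 = 0 := rfl
private lemma sg5_a3 : sg5 3 = 3 := rfl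
private lemma sg5_a4 : sg5 4 = 4 := rfl
private lemma sg5_a5 : sg5 5 = 5 := rfl
private lemma sg5_sign : (Equiv.Perm.sign sg5 : ℤ) = -1 := by decide
private def sg6 : Equiv.Perm (Fin 6) := ⟨![3,0,1,2,4,5], ![1,2,3,0,4,5], by decide, by decide⟩
private lemma sg6_a0 : sg6 0 = 3 := rfl
private lemma sg6_a1 : sg6 1 = 0 := rfl
private lemma sg6_a2 : sg6 2 = 1 := rfl
private lemma sg6_a3 : sg6 3 = 2 := rfl
private lemma sg6_a4 : sg6 4 = 4 := rfl
private lemma sg6_a5 : sg6 5 = 5 := rfl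
private lemma sg6_sign : (Equiv.Perm.sign sg6 : ℤ) = -1 := by decide
private def sg7 : Equiv.Perm (Fin 6) := ⟨![3,0,2,1,4,5], ![1,3,2,0,4,5], by decide, by decide⟩
private lemma sg7_a0 : sg7 0 = 3 := rfl
private lemma sg7_a1 : sg7 1 = 0 := rfl
private lemma sg7_a2 : sg7 2 = 2 := rfl
private lemma sg7_a3 : sg7 3 = 1 := rfl
private lemma sg7_a4 : sg7 4 = 4 := rfl
private lemma sg7_a5 : sg7 5 = 5 := rfl
private lemma sg7_sign : (Equiv.Perm.sign sg7 : ℤ) = 1 := by decide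
private def sg8 : Equiv.Perm (Fin 6) := ⟨![3,1,0,2,4,5], ![2,1,3,0,4,5], by decide, by decide⟩
private lemma sg8_a0 : sg8 0 = 3 := rfl
private lemma sg8_a1 : sg8 1 = 1 := rfl
private lemma sg8_a2 : sg8 2 = 0 := rfl
private lemma sg8_a3 : sg8 3 = 2 := rfl
private lemma sg8_a4 : sg8 4 = 4 := rfl
private lemma sg8_a5 : sg8 5 = 5 := rfl
private lemma sg8_sign : (Equiv.Perm.sign sg8 : ℤ) = 1 := by decide
private def sg9 : Equiv.Perm (Fin 6) := ⟨![3,1,2,0,4,5], ![3,1,2,0,4,5], by decide, by decide⟩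
private lemma sg9_a0 : sg9 0 = 3 := rfl
private lemma sg9_a1 : sg9 1 = 1 := rfl
private lemma sg9_a2 : sg9 2 = 2 := rfl
private lemma sg9_a3 : sg9 3 = 0 := rfl
private lemma sg9_a4 : sg9 4 = 4 := rfl
private lemma sg9_a5 : sg9 5 = 5 := rfl
private lemma sg9_sign : (Equiv.Perm.sign sg9 : ℤ) = -1 := by decide
private def sg10 : Equiv.Perm (Fin 6) := ⟨![3,2,0,1,4,5], ![2,3,1,0,4,5], by decide, by decide⟩
private lemma sg10_a0 : sg10 0 = 3 := rfl
private lemma sg10_a1 : sg10 1 = 2 := rfl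
private lemma sg10_a2 : sg10 2 = 0 := rfl
private lemma sg10_a3 : sg10 3 = 1 := rfl
private lemma sg10_a4 : sg10 4 = 4 := rfl
private lemma sg10_a5 : sg10 5 = 5 := rfl
private lemma sg10_sign : (Equiv.Perm.sign sg10 : ℤ) = -1 := by decide
private def sg11 : Equiv.Perm (Fin 6) := ⟨![3,2,1,0,4,5], ![3,2,1,0,4,5], by decide, by decide⟩
private lemma sg11_a0 : sg11 0 = 3 := rfl
private lemma sg11_a1 : sg11 1 = 2 := rfl
private lemma sg11_a2 : sg11 2 = 1 := rfl
private lemma sg11_a3 : sg11 3 = 0 := rfl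
private lemma sg11_a4 : sg11 4 = 4 := rfl
private lemma sg11_a5 : sg11 5 = 5 := rfl
private lemma sg11_sign : (Equiv.Perm.sign sg11 : ℤ) = 1 := by decide
private def sg12 : Equiv.Perm (Fin 6) := ⟨![0,1,2,3,5,4], ![0,1,2,3,5,4], by decide, by decide⟩
private lemma sg12_a0 : sg12 0 = 0 := rfl
private lemma sg12_a1 : sg12 1 = 1 := rfl
private lemma sg12_a2 : sg12 2 = 2 := rfl
private lemma sg12_a3 : sg12 3 = 3 := rfl
private lemma sg12_a4 : sg12 4 = 5 := rfl
private lemma sg12_a5 : sg12 5 = 4 := rfl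
private lemma sg12_sign : (Equiv.Perm.sign sg12 : ℤ) = -1 := by decide
private def sg13 : Equiv.Perm (Fin 6) := ⟨![0,2,1,3,5,4], ![0,2,1,3,5,4], by decide, by decide⟩
private lemma sg13_a0 : sg13 0 = 0 := rfl
private lemma sg13_a1 : sg13 1 = 2 := rfl
private lemma sg13_a2 : sg13 2 = 1 := rfl
private lemma sg13_a3 : sg13 3 = 3 := rfl
private lemma sg13_a4 : sg13 4 = 5 := rfl
private lemma sg13_a5 : sg13 5 = 4 := rfl
private lemma sg13_sign : (Equiv.Perm.sign sg13 : ℤ) = 1 := by decide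
private def sg14 : Equiv.Perm (Fin 6) := ⟨![1,0,2,3,5,4], ![1,0,2,3,5,4], by decide, by decide⟩
private lemma sg14_a0 : sg14 0 = 1 := rfl
private lemma sg14_a1 : sg14 1 = 0 := rfl
private lemma sg14_a2 : sg14 2 = 2 := rfl
private lemma sg14_a3 : sg14 3 = 3 := rfl
private lemma sg14_a4 : sg14 4 = 5 := rfl
private lemma sg14_a5 : sg14 5 = 4 := rfl
private lemma sg14_sign : (Equiv.Perm.sign sg14 : ℤ) = 1 := by decide
private def sg15 : Equiv.Perm (Fin 6) := ⟨![1,2,0,3,5,4], ![2,0,1,3,5,4], by decide, by decide⟩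
private lemma sg15_a0 : sg15 0 = 1 := rfl
private lemma sg15_a1 : sg15 1 = 2 := rfl
private lemma sg15_a2 : sg15 2 = 0 := rfl
private lemma sg15_a3 : sg15 3 = 3 := rfl
private lemma sg15_a4 : sg15 4 = 5 := rfl
private lemma sg15_a5 : sg15 5 = 4 := rfl
private lemma sg15_sign : (Equiv.Perm.sign sg15 : ℤ) = -1 := by decide
private def sg16 : Equiv.Perm (Fin 6) := ⟨![2,0,1,3,5,4], ![1,2,0,3,5,4], by decide, by decide⟩
private lemma sg16_a0 : sg16 0 = 2 := rfl
private lemma sg16_a1 : sg16 1 = 0 := rfl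
private lemma sg16_a2 : sg16 2 = 1 := rfl
private lemma sg16_a3 : sg16 3 = 3 := rfl
private lemma sg16_a4 : sg16 4 = 5 := rfl
private lemma sg16_a5 : sg16 5 = 4 := rfl
private lemma sg16_sign : (Equiv.Perm.sign sg16 : ℤ) = -1 := by decide
private def sg17 : Equiv.Perm (Fin 6) := ⟨![2,1,0,3,5,4], ![2,1,0,3,5,4], by decide, by decide⟩
private lemma sg17_a0 : sg17 0 = 2 := rfl
private lemma sg17_a1 : sg17 1 = 1 := rfl
private lemma sg17_a2 : sg17 2 = 0 := rfl
private lemma sg17_a3 : sg17 3 = 3 := rfl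
private lemma sg17_a4 : sg17 4 = 5 := rfl
private lemma sg17_a5 : sg17 5 = 4 := rfl
private lemma sg17_sign : (Equiv.Perm.sign sg17 : ℤ) = 1 := by decide
private def sg18 : Equiv.Perm (Fin 6) := ⟨![3,0,1,2,5,4], ![1,2,3,0,5,4], by decide, by decide⟩
private lemma sg18_a0 : sg18 0 = 3 := rfl
private lemma sg18_a1 : sg18 1 = 0 := rfl
private lemma sg18_a2 : sg18 2 = 1 := rfl
private lemma sg18_a3 : sg18 3 = 2 := rfl
private lemma sg18_a4 : sg18 4 = 5 := rfl
private lemma sg18_a5 : sg18 5 = 4 := rfl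
private lemma sg18_sign : (Equiv.Perm.sign sg18 : ℤ) = 1 := by decide
private def sg19 : Equiv.Perm (Fin 6) := ⟨![3,0,2,1,5,4], ![1,3,2,0,5,4], by decide, by decide⟩
private lemma sg19_a0 : sg19 0 = 3 := rfl
private lemma sg19_a1 : sg19 1 = 0 := rfl
private lemma sg19_a2 : sg19 2 = 2 := rfl
private lemma sg19_a3 : sg19 3 = 1 := rfl
private lemma sg19_a4 : sg19 4 = 5 := rfl
private lemma sg19_a5 : sg19 5 = 4 := rfl
private lemma sg19_sign : (Equiv.Perm.sign sg19 : ℤ) = -1 := by decide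
private def sg20 : Equiv.Perm (Fin 6) := ⟨![3,1,0,2,5,4], ![2,1,3,0,5,4], by decide, by decide⟩
private lemma sg20_a0 : sg20 0 = 3 := rfl
private lemma sg20_a1 : sg20 1 = 1 := rfl
private lemma sg20_a2 : sg20 2 = 0 := rfl
private lemma sg20_a3 : sg20 3 = 2 := rfl
private lemma sg20_a4 : sg20 4 = 5 := rfl
private lemma sg20_a5 : sg20 5 = 4 := rfl
private lemma sg20_sign : (Equiv.Perm.sign sg20 : ℤ) = -1 := by decide
private def sg21 : Equiv.Perm (Fin 6) := ⟨![3,1,2,0,5,4], ![3,1,2,0,5,4], by decide, by decide⟩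
private lemma sg21_a0 : sg21 0 = 3 := rfl
private lemma sg21_a1 : sg21 1 = 1 := rfl
private lemma sg21_a2 : sg21 2 = 2 := rfl
private lemma sg21_a3 : sg21 3 = 0 := rfl
private lemma sg21_a4 : sg21 4 = 5 := rfl
private lemma sg21_a5 : sg21 5 = 4 := rfl
private lemma sg21_sign : (Equiv.Perm.sign sg21 : ℤ) = 1 := by decide
private def sg22 : Equiv.Perm (Fin 6) := ⟨![3,2,0,1,5,4], ![2,3,1,0,5,4], by decide, by decide⟩
private lemma sg22_a0 : sg22 0 = 3 := rfl
private lemma sg22_a1 : sg22 1 = 2 := rfl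
private lemma sg22_a2 : sg22 2 = 0 := rfl
private lemma sg22_a3 : sg22 3 = 1 := rfl
private lemma sg22_a4 : sg22 4 = 5 := rfl
private lemma sg22_a5 : sg22 5 = 4 := rfl
private lemma sg22_sign : (Equiv.Perm.sign sg22 : ℤ) = 1 := by decide
private def sg23 : Equiv.Perm (Fin 6) := ⟨![3,2,1,0,5,4], ![3,2,1,0,5,4], by decide, by decide⟩
private lemma sg23_a0 : sg23 0 = 3 := rfl
private lemma sg23_a1 : sg23 1 = 2 := rfl
private lemma sg23_a2 : sg23 2 = 1 := rfl
private lemma sg23_a3 : sg23 3 = 0 := rfl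
private lemma sg23_a4 : sg23 4 = 5 := rfl
private lemma sg23_a5 : sg23 5 = 4 := rfl
private lemma sg23_sign : (Equiv.Perm.sign sg23 : ℤ) = -1 := by decide
private def sg24 : Equiv.Perm (Fin 6) := ⟨![4,0,1,2,3,5], ![1,2,3,4,0,5], by decide, by decide⟩
private lemma sg24_a0 : sg24 0 = 4 := rfl
private lemma sg24_a1 : sg24 1 = 0 := rfl
private lemma sg24_a2 : sg24 2 = 1 := rfl
private lemma sg24_a3 : sg24 3 = 2 := rfl
private lemma sg24_a4 : sg24 4 = 3 := rfl
private lemma sg24_a5 : sg24 5 = 5 := rfl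
private lemma sg24_sign : (Equiv.Perm.sign sg24 : ℤ) = 1 := by decide
private def sg25 : Equiv.Perm (Fin 6) := ⟨![4,0,2,1,3,5], ![1,3,2,4,0,5], by decide, by decide⟩
private lemma sg25_a0 : sg25 0 = 4 := rfl
private lemma sg25_a1 : sg25 1 = 0 := rfl
private lemma sg25_a2 : sg25 2 = 2 := rfl
private lemma sg25_a3 : sg25 3 = 1 := rfl
private lemma sg25_a4 : sg25 4 = 3 := rfl
private lemma sg25_a5 : sg25 5 = 5 := rfl
private lemma sg25_sign : (Equiv.Perm.sign sg25 : ℤ) = -1 := by decide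
private def sg26 : Equiv.Perm (Fin 6) := ⟨![4,1,0,2,3,5], ![2,1,3,4,0,5], by decide, by decide⟩
private lemma sg26_a0 : sg26 0 = 4 := rfl
private lemma sg26_a1 : sg26 1 = 1 := rfl
private lemma sg26_a2 : sg26 2 = 0 := rfl
private lemma sg26_a3 : sg26 3 = 2 := rfl
private lemma sg26_a4 : sg26 4 = 3 := rfl
private lemma sg26_a5 : sg26 5 = 5 := rfl
private lemma sg26_sign : (Equiv.Perm.sign sg26 : ℤ) = -1 := by decide
private def sg27 : Equiv.Perm (Fin 6) := ⟨![4,1,2,0,3,5], ![3,1,2,4,0,5], by decide, by decide⟩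
private lemma sg27_a0 : sg27 0 = 4 := rfl
private lemma sg27_a1 : sg27 1 = 1 := rfl
private lemma sg27_a2 : sg27 2 = 2 := rfl
private lemma sg27_a3 : sg27 3 = 0 := rfl
private lemma sg27_a4 : sg27 4 = 3 := rfl
private lemma sg27_a5 : sg27 5 = 5 := rfl
private lemma sg27_sign : (Equiv.Perm.sign sg27 : ℤ) = 1 := by decide
private def sg28 : Equiv.Perm (Fin 6) := ⟨![4,2,0,1,3,5], ![2,3,1,4,0,5], by decide, by decide⟩
private lemma sg28_a0 : sg28 0 = 4 := rfl
private lemma sg28_a1 : sg28 1 = 2 := rfl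
private lemma sg28_a2 : sg28 2 = 0 := rfl
private lemma sg28_a3 : sg28 3 = 1 := rfl
private lemma sg28_a4 : sg28 4 = 3 := rfl
private lemma sg28_a5 : sg28 5 = 5 := rfl
private lemma sg28_sign : (Equiv.Perm.sign sg28 : ℤ) = 1 := by decide
private def sg29 : Equiv.Perm (Fin 6) := ⟨![4,2,1,0,3,5], ![3,2,1,4,0,5], by decide, by decide⟩
private lemma sg29_a0 : sg29 0 = 4 := rfl
private lemma sg29_a1 : sg29 1 = 2 := rfl
private lemma sg29_a2 : sg29 2 = 1 := rfl
private lemma sg29_a3 : sg29 3 = 0 := rfl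
private lemma sg29_a4 : sg29 4 = 3 := rfl
private lemma sg29_a5 : sg29 5 = 5 := rfl
private lemma sg29_sign : (Equiv.Perm.sign sg29 : ℤ) = -1 := by decide
private def sg30 : Equiv.Perm (Fin 6) := ⟨![4,3,0,1,2,5], ![2,3,4,1,0,5], by decide, by decide⟩
private lemma sg30_a0 : sg30 0 = 4 := rfl
private lemma sg30_a1 : sg30 1 = 3 := rfl
private lemma sg30_a2 : sg30 2 = 0 := rfl
private lemma sg30_a3 : sg30 3 = 1 := rfl
private lemma sg30_a4 : sg30 4 = 2 := rfl
private lemma sg30_a5 : sg30 5 = 5 := rfl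
private lemma sg30_sign : (Equiv.Perm.sign sg30 : ℤ) = -1 := by decide
private def sg31 : Equiv.Perm (Fin 6) := ⟨![4,3,0,2,1,5], ![2,4,3,1,0,5], by decide, by decide⟩
private lemma sg31_a0 : sg31 0 = 4 := rfl
private lemma sg31_a1 : sg31 1 = 3 := rfl
private lemma sg31_a2 : sg31 2 = 0 := rfl
private lemma sg31_a3 : sg31 3 = 2 := rfl
private lemma sg31_a4 : sg31 4 = 1 := rfl
private lemma sg31_a5 : sg31 5 = 5 := rfl
private lemma sg31_sign : (Equiv.Perm.sign sg31 : ℤ) = 1 := by decide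
private def sg32 : Equiv.Perm (Fin 6) := ⟨![4,3,1,0,2,5], ![3,2,4,1,0,5], by decide, by decide⟩
private lemma sg32_a0 : sg32 0 = 4 := rfl
private lemma sg32_a1 : sg32 1 = 3 := rfl
private lemma sg32_a2 : sg32 2 = 1 := rfl
private lemma sg32_a3 : sg32 3 = 0 := rfl
private lemma sg32_a4 : sg32 4 = 2 := rfl
private lemma sg32_a5 : sg32 5 = 5 := rfl
private lemma sg32_sign : (Equiv.Perm.sign sg32 : ℤ) = 1 := by decide
private def sg33 : Equiv.Perm (Fin 6) := ⟨![4,3,1,2,0,5], ![4,2,3,1,0,5], by decide, by decide⟩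
private lemma sg33_a0 : sg33 0 = 4 := rfl
private lemma sg33_a1 : sg33 1 = 3 := rfl
private lemma sg33_a2 : sg33 2 = 1 := rfl
private lemma sg33_a3 : sg33 3 = 2 := rfl
private lemma sg33_a4 : sg33 4 = 0 := rfl
private lemma sg33_a5 : sg33 5 = 5 := rfl
private lemma sg33_sign : (Equiv.Perm.sign sg33 : ℤ) = -1 := by decide
private def sg34 : Equiv.Perm (Fin 6) := ⟨![4,3,2,0,1,5], ![3,4,2,1,0,5], by decide, by decide⟩
private lemma sg34_a0 : sg34 0 = 4 := rfl
private lemma sg34_a1 : sg34 1 = 3 := rfl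
private lemma sg34_a2 : sg34 2 = 2 := rfl
private lemma sg34_a3 : sg34 3 = 0 := rfl
private lemma sg34_a4 : sg34 4 = 1 := rfl
private lemma sg34_a5 : sg34 5 = 5 := rfl
private lemma sg34_sign : (Equiv.Perm.sign sg34 : ℤ) = -1 := by decide
private def sg35 : Equiv.Perm (Fin 6) := ⟨![4,3,2,1,0,5], ![4,3,2,1,0,5], by decide, by decide⟩
private lemma sg35_a0 : sg35 0 = 4 := rfl
private lemma sg35_a1 : sg35 1 = 3 := rfl
private lemma sg35_a2 : sg35 2 = 2 := rfl
private lemma sg35_a3 : sg35 3 = 1 := rfl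
private lemma sg35_a4 : sg35 4 = 0 := rfl
private lemma sg35_a5 : sg35 5 = 5 := rfl
private lemma sg35_sign : (Equiv.Perm.sign sg35 : ℤ) = 1 := by decide
private def sg36 : Equiv.Perm (Fin 6) := ⟨![4,5,0,1,2,3], ![2,3,4,5,0,1], by decide, by decide⟩
private lemma sg36_a0 : sg36 0 = 4 := rfl
private lemma sg36_a1 : sg36 1 = 5 := rfl
private lemma sg36_a2 : sg36 2 = 0 := rfl
private lemma sg36_a3 : sg36 3 = 1 := rfl
private lemma sg36_a4 : sg36 4 = 2 := rfl
private lemma sg36_a5 : sg36 5 = 3 := rfl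
private lemma sg36_sign : (Equiv.Perm.sign sg36 : ℤ) = 1 := by decide
private def sg37 : Equiv.Perm (Fin 6) := ⟨![4,5,0,2,1,3], ![2,4,3,5,0,1], by decide, by decide⟩
private lemma sg37_a0 : sg37 0 = 4 := rfl
private lemma sg37_a1 : sg37 1 = 5 := rfl
private lemma sg37_a2 : sg37 2 = 0 := rfl
private lemma sg37_a3 : sg37 3 = 2 := rfl
private lemma sg37_a4 : sg37 4 = 1 := rfl
private lemma sg37_a5 : sg37 5 = 3 := rfl
private lemma sg37_sign : (Equiv.Perm.sign sg37 : ℤ) = -1 := by decide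
private def sg38 : Equiv.Perm (Fin 6) := ⟨![4,5,1,0,2,3], ![3,2,4,5,0,1], by decide, by decide⟩
private lemma sg38_a0 : sg38 0 = 4 := rfl
private lemma sg38_a1 : sg38 1 = 5 := rfl
private lemma sg38_a2 : sg38 2 = 1 := rfl
private lemma sg38_a3 : sg38 3 = 0 := rfl
private lemma sg38_a4 : sg38 4 = 2 := rfl
private lemma sg38_a5 : sg38 5 = 3 := rfl
private lemma sg38_sign : (Equiv.Perm.sign sg38 : ℤ) = -1 := by decide
private def sg39 : Equiv.Perm (Fin 6) := ⟨![4,5,1,2,0,3], ![4,2,3,5,0,1], by decide, by decide⟩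
private lemma sg39_a0 : sg39 0 = 4 := rfl
private lemma sg39_a1 : sg39 1 = 5 := rfl
private lemma sg39_a2 : sg39 2 = 1 := rfl
private lemma sg39_a3 : sg39 3 = 2 := rfl
private lemma sg39_a4 : sg39 4 = 0 := rfl
private lemma sg39_a5 : sg39 5 = 3 := rfl
private lemma sg39_sign : (Equiv.Perm.sign sg39 : ℤ) = 1 := by decide
private def sg40 : Equiv.Perm (Fin 6) := ⟨![4,5,2,0,1,3], ![3,4,2,5,0,1], by decide, by decide⟩
private lemma sg40_a0 : sg40 0 = 4 := rfl
private lemma sg40_a1 : sg40 1 = 5 := rfl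
private lemma sg40_a2 : sg40 2 = 2 := rfl
private lemma sg40_a3 : sg40 3 = 0 := rfl
private lemma sg40_a4 : sg40 4 = 1 := rfl
private lemma sg40_a5 : sg40 5 = 3 := rfl
private lemma sg40_sign : (Equiv.Perm.sign sg40 : ℤ) = 1 := by decide
private def sg41 : Equiv.Perm (Fin 6) := ⟨![4,5,2,1,0,3], ![4,3,2,5,0,1], by decide, by decide⟩
private lemma sg41_a0 : sg41 0 = 4 := rfl
private lemma sg41_a1 : sg41 1 = 5 := rfl
private lemma sg41_a2 : sg41 2 = 2 := rfl
private lemma sg41_a3 : sg41 3 = 1 := rfl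
private lemma sg41_a4 : sg41 4 = 0 := rfl
private lemma sg41_a5 : sg41 5 = 3 := rfl
private lemma sg41_sign : (Equiv.Perm.sign sg41 : ℤ) = -1 := by decide
private def sg42 : Equiv.Perm (Fin 6) := ⟨![4,5,3,0,1,2], ![3,4,5,2,0,1], by decide, by decide⟩
private lemma sg42_a0 : sg42 0 = 4 := rfl
private lemma sg42_a1 : sg42 1 = 5 := rfl
private lemma sg42_a2 : sg42 2 = 3 := rfl
private lemma sg42_a3 : sg42 3 = 0 := rfl
private lemma sg42_a4 : sg42 4 = 1 := rfl
private lemma sg42_a5 : sg42 5 = 2 := rfl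
private lemma sg42_sign : (Equiv.Perm.sign sg42 : ℤ) = -1 := by decide
private def sg43 : Equiv.Perm (Fin 6) := ⟨![4,5,3,0,2,1], ![3,5,4,2,0,1], by decide, by decide⟩
private lemma sg43_a0 : sg43 0 = 4 := rfl
private lemma sg43_a1 : sg43 1 = 5 := rfl
private lemma sg43_a2 : sg43 2 = 3 := rfl
private lemma sg43_a3 : sg43 3 = 0 := rfl
private lemma sg43_a4 : sg43 4 = 2 := rfl
private lemma sg43_a5 : sg43 5 = 1 := rfl
private lemma sg43_sign : (Equiv.Perm.sign sg43 : ℤ) = 1 := by decide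
private def sg44 : Equiv.Perm (Fin 6) := ⟨![4,5,3,1,0,2], ![4,3,5,2,0,1], by decide, by decide⟩
private lemma sg44_a0 : sg44 0 = 4 := rfl
private lemma sg44_a1 : sg44 1 = 5 := rfl
private lemma sg44_a2 : sg44 2 = 3 := rfl
private lemma sg44_a3 : sg44 3 = 1 := rfl
private lemma sg44_a4 : sg44 4 = 0 := rfl
private lemma sg44_a5 : sg44 5 = 2 := rfl
private lemma sg44_sign : (Equiv.Perm.sign sg44 : ℤ) = 1 := by decide
private def sg45 : Equiv.Perm (Fin 6) := ⟨![4,5,3,1,2,0], ![5,3,4,2,0,1], by decide, by decide⟩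
private lemma sg45_a0 : sg45 0 = 4 := rfl
private lemma sg45_a1 : sg45 1 = 5 := rfl
private lemma sg45_a2 : sg45 2 = 3 := rfl
private lemma sg45_a3 : sg45 3 = 1 := rfl
private lemma sg45_a4 : sg45 4 = 2 := rfl
private lemma sg45_a5 : sg45 5 = 0 := rfl
private lemma sg45_sign : (Equiv.Perm.sign sg45 : ℤ) = -1 := by decide
private def sg46 : Equiv.Perm (Fin 6) := ⟨![4,5,3,2,0,1], ![4,5,3,2,0,1], by decide, by decide⟩
private lemma sg46_a0 : sg46 0 = 4 := rfl
private lemma sg46_a1 : sg46 1 = 5 := rfl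
private lemma sg46_a2 : sg46 2 = 3 := rfl
private lemma sg46_a3 : sg46 3 = 2 := rfl
private lemma sg46_a4 : sg46 4 = 0 := rfl
private lemma sg46_a5 : sg46 5 = 1 := rfl
private lemma sg46_sign : (Equiv.Perm.sign sg46 : ℤ) = -1 := by decide
private def sg47 : Equiv.Perm (Fin 6) := ⟨![4,5,3,2,1,0], ![5,4,3,2,0,1], by decide, by decide⟩
private lemma sg47_a0 : sg47 0 = 4 := rfl
private lemma sg47_a1 : sg47 1 = 5 := rfl
private lemma sg47_a2 : sg47 2 = 3 := rfl
private lemma sg47_a3 : sg47 3 = 2 := rfl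
private lemma sg47_a4 : sg47 4 = 1 := rfl
private lemma sg47_a5 : sg47 5 = 0 := rfl
private lemma sg47_sign : (Equiv.Perm.sign sg47 : ℤ) = 1 := by decide
private def sg48 : Equiv.Perm (Fin 6) := ⟨![5,0,1,2,3,4], ![1,2,3,4,5,0], by decide, by decide⟩
private lemma sg48_a0 : sg48 0 = 5 := rfl
private lemma sg48_a1 : sg48 1 = 0 := rfl
private lemma sg48_a2 : sg48 2 = 1 := rfl
private lemma sg48_a3 : sg48 3 = 2 := rfl
private lemma sg48_a4 : sg48 4 = 3 := rfl
private lemma sg48_a5 : sg48 5 = 4 := rfl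
private lemma sg48_sign : (Equiv.Perm.sign sg48 : ℤ) = -1 := by decide
private def sg49 : Equiv.Perm (Fin 6) := ⟨![5,0,2,1,3,4], ![1,3,2,4,5,0], by decide, by decide⟩
private lemma sg49_a0 : sg49 0 = 5 := rfl
private lemma sg49_a1 : sg49 1 = 0 := rfl
private lemma sg49_a2 : sg49 2 = 2 := rfl
private lemma sg49_a3 : sg49 3 = 1 := rfl
private lemma sg49_a4 : sg49 4 = 3 := rfl
private lemma sg49_a5 : sg49 5 = 4 := rfl
private lemma sg49_sign : (Equiv.Perm.sign sg49 : ℤ) = 1 := by decide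
private def sg50 : Equiv.Perm (Fin 6) := ⟨![5,1,0,2,3,4], ![2,1,3,4,5,0], by decide, by decide⟩
private lemma sg50_a0 : sg50 0 = 5 := rfl
private lemma sg50_a1 : sg50 1 = 1 := rfl
private lemma sg50_a2 : sg50 2 = 0 := rfl
private lemma sg50_a3 : sg50 3 = 2 := rfl
private lemma sg50_a4 : sg50 4 = 3 := rfl
private lemma sg50_a5 : sg50 5 = 4 := rfl
private lemma sg50_sign : (Equiv.Perm.sign sg50 : ℤ) = 1 := by decide
private def sg51 : Equiv.Perm (Fin 6) := ⟨![5,1,2,0,3,4], ![3,1,2,4,5,0], by decide, by decide⟩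
private lemma sg51_a0 : sg51 0 = 5 := rfl
private lemma sg51_a1 : sg51 1 = 1 := rfl
private lemma sg51_a2 : sg51 2 = 2 := rfl
private lemma sg51_a3 : sg51 3 = 0 := rfl
private lemma sg51_a4 : sg51 4 = 3 := rfl
private lemma sg51_a5 : sg51 5 = 4 := rfl
private lemma sg51_sign : (Equiv.Perm.sign sg51 : ℤ) = -1 := by decide
private def sg52 : Equiv.Perm (Fin 6) := ⟨![5,2,0,1,3,4], ![2,3,1,4,5,0], by decide, by decide⟩
private lemma sg52_a0 : sg52 0 = 5 := rfl
private lemma sg52_a1 : sg52 1 = 2 := rfl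
private lemma sg52_a2 : sg52 2 = 0 := rfl
private lemma sg52_a3 : sg52 3 = 1 := rfl
private lemma sg52_a4 : sg52 4 = 3 := rfl
private lemma sg52_a5 : sg52 5 = 4 := rfl
private lemma sg52_sign : (Equiv.Perm.sign sg52 : ℤ) = -1 := by decide
private def sg53 : Equiv.Perm (Fin 6) := ⟨![5,2,1,0,3,4], ![3,2,1,4,5,0], by decide, by decide⟩
private lemma sg53_a0 : sg53 0 = 5 := rfl
private lemma sg53_a1 : sg53 1 = 2 := rfl
private lemma sg53_a2 : sg53 2 = 1 := rfl
private lemma sg53_a3 : sg53 3 = 0 := rfl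
private lemma sg53_a4 : sg53 4 = 3 := rfl
private lemma sg53_a5 : sg53 5 = 4 := rfl
private lemma sg53_sign : (Equiv.Perm.sign sg53 : ℤ) = 1 := by decide
private def sg54 : Equiv.Perm (Fin 6) := ⟨![5,3,0,1,2,4], ![2,3,4,1,5,0], by decide, by decide⟩
private lemma sg54_a0 : sg54 0 = 5 := rfl
private lemma sg54_a1 : sg54 1 = 3 := rfl
private lemma sg54_a2 : sg54 2 = 0 := rfl
private lemma sg54_a3 : sg54 3 = 1 := rfl
private lemma sg54_a4 : sg54 4 = 2 := rfl
private lemma sg54_a5 : sg54 5 = 4 := rfl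
private lemma sg54_sign : (Equiv.Perm.sign sg54 : ℤ) = 1 := by decide
private def sg55 : Equiv.Perm (Fin 6) := ⟨![5,3,0,2,1,4], ![2,4,3,1,5,0], by decide, by decide⟩
private lemma sg55_a0 : sg55 0 = 5 := rfl
private lemma sg55_a1 : sg55 1 = 3 := rfl
private lemma sg55_a2 : sg55 2 = 0 := rfl
private lemma sg55_a3 : sg55 3 = 2 := rfl
private lemma sg55_a4 : sg55 4 = 1 := rfl
private lemma sg55_a5 : sg55 5 = 4 := rfl
private lemma sg55_sign : (Equiv.Perm.sign sg55 : ℤ) = -1 := by decide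
private def sg56 : Equiv.Perm (Fin 6) := ⟨![5,3,1,0,2,4], ![3,2,4,1,5,0], by decide, by decide⟩
private lemma sg56_a0 : sg56 0 = 5 := rfl
private lemma sg56_a1 : sg56 1 = 3 := rfl
private lemma sg56_a2 : sg56 2 = 1 := rfl
private lemma sg56_a3 : sg56 3 = 0 := rfl
private lemma sg56_a4 : sg56 4 = 2 := rfl
private lemma sg56_a5 : sg56 5 = 4 := rfl
private lemma sg56_sign : (Equiv.Perm.sign sg56 : ℤ) = -1 := by decide
private def sg57 : Equiv.Perm (Fin 6) := ⟨![5,3,1,2,0,4], ![4,2,3,1,5,0], by decide, by decide⟩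
private lemma sg57_a0 : sg57 0 = 5 := rfl
private lemma sg57_a1 : sg57 1 = 3 := rfl
private lemma sg57_a2 : sg57 2 = 1 := rfl
private lemma sg57_a3 : sg57 3 = 2 := rfl
private lemma sg57_a4 : sg57 4 = 0 := rfl
private lemma sg57_a5 : sg57 5 = 4 := rfl
private lemma sg57_sign : (Equiv.Perm.sign sg57 : ℤ) = 1 := by decide
private def sg58 : Equiv.Perm (Fin 6) := ⟨![5,3,2,0,1,4], ![3,4,2,1,5,0], by decide, by decide⟩
private lemma sg58_a0 : sg58 0 = 5 := rfl
private lemma sg58_a1 : sg58 1 = 3 := rfl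
private lemma sg58_a2 : sg58 2 = 2 := rfl
private lemma sg58_a3 : sg58 3 = 0 := rfl
private lemma sg58_a4 : sg58 4 = 1 := rfl
private lemma sg58_a5 : sg58 5 = 4 := rfl
private lemma sg58_sign : (Equiv.Perm.sign sg58 : ℤ) = 1 := by decide
private def sg59 : Equiv.Perm (Fin 6) := ⟨![5,3,2,1,0,4], ![4,3,2,1,5,0], by decide, by decide⟩
private lemma sg59_a0 : sg59 0 = 5 := rfl
private lemma sg59_a1 : sg59 1 = 3 := rfl
private lemma sg59_a2 : sg59 2 = 2 := rfl
private lemma sg59_a3 : sg59 3 = 1 := rfl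
private lemma sg59_a4 : sg59 4 = 0 := rfl
private lemma sg59_a5 : sg59 5 = 4 := rfl
private lemma sg59_sign : (Equiv.Perm.sign sg59 : ℤ) = -1 := by decide
private def sg60 : Equiv.Perm (Fin 6) := ⟨![5,4,0,1,2,3], ![2,3,4,5,1,0], by decide, by decide⟩
private lemma sg60_a0 : sg60 0 = 5 := rfl
private lemma sg60_a1 : sg60 1 = 4 := rfl
private lemma sg60_a2 : sg60 2 = 0 := rfl
private lemma sg60_a3 : sg60 3 = 1 := rfl
private lemma sg60_a4 : sg60 4 = 2 := rfl
private lemma sg60_a5 : sg60 5 = 3 := rfl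
private lemma sg60_sign : (Equiv.Perm.sign sg60 : ℤ) = -1 := by decide
private def sg61 : Equiv.Perm (Fin 6) := ⟨![5,4,0,2,1,3], ![2,4,3,5,1,0], by decide, by decide⟩
private lemma sg61_a0 : sg61 0 = 5 := rfl
private lemma sg61_a1 : sg61 1 = 4 := rfl
private lemma sg61_a2 : sg61 2 = 0 := rfl
private lemma sg61_a3 : sg61 3 = 2 := rfl
private lemma sg61_a4 : sg61 4 = 1 := rfl
private lemma sg61_a5 : sg61 5 = 3 := rfl
private lemma sg61_sign : (Equiv.Perm.sign sg61 : ℤ) = 1 := by decide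
private def sg62 : Equiv.Perm (Fin 6) := ⟨![5,4,1,0,2,3], ![3,2,4,5,1,0], by decide, by decide⟩
private lemma sg62_a0 : sg62 0 = 5 := rfl
private lemma sg62_a1 : sg62 1 = 4 := rfl
private lemma sg62_a2 : sg62 2 = 1 := rfl
private lemma sg62_a3 : sg62 3 = 0 := rfl
private lemma sg62_a4 : sg62 4 = 2 := rfl
private lemma sg62_a5 : sg62 5 = 3 := rfl
private lemma sg62_sign : (Equiv.Perm.sign sg62 : ℤ) = 1 := by decide
private def sg63 : Equiv.Perm (Fin 6) := ⟨![5,4,1,2,0,3], ![4,2,3,5,1,0], by decide, by decide⟩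
private lemma sg63_a0 : sg63 0 = 5 := rfl
private lemma sg63_a1 : sg63 1 = 4 := rfl
private lemma sg63_a2 : sg63 2 = 1 := rfl
private lemma sg63_a3 : sg63 3 = 2 := rfl
private lemma sg63_a4 : sg63 4 = 0 := rfl
private lemma sg63_a5 : sg63 5 = 3 := rfl
private lemma sg63_sign : (Equiv.Perm.sign sg63 : ℤ) = -1 := by decide
private def sg64 : Equiv.Perm (Fin 6) := ⟨![5,4,2,0,1,3], ![3,4,2,5,1,0], by decide, by decide⟩
private lemma sg64_a0 : sg64 0 = 5 := rfl
private lemma sg64_a1 : sg64 1 = 4 := rfl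
private lemma sg64_a2 : sg64 2 = 2 := rfl
private lemma sg64_a3 : sg64 3 = 0 := rfl
private lemma sg64_a4 : sg64 4 = 1 := rfl
private lemma sg64_a5 : sg64 5 = 3 := rfl
private lemma sg64_sign : (Equiv.Perm.sign sg64 : ℤ) = -1 := by decide
private def sg65 : Equiv.Perm (Fin 6) := ⟨![5,4,2,1,0,3], ![4,3,2,5,1,0], by decide, by decide⟩
private lemma sg65_a0 : sg65 0 = 5 := rfl
private lemma sg65_a1 : sg65 1 = 4 := rfl
private lemma sg65_a2 : sg65 2 = 2 := rfl
private lemma sg65_a3 : sg65 3 = 1 := rfl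
private lemma sg65_a4 : sg65 4 = 0 := rfl
private lemma sg65_a5 : sg65 5 = 3 := rfl
private lemma sg65_sign : (Equiv.Perm.sign sg65 : ℤ) = 1 := by decide
private def sg66 : Equiv.Perm (Fin 6) := ⟨![5,4,3,0,1,2], ![3,4,5,2,1,0], by decide, by decide⟩
private lemma sg66_a0 : sg66 0 = 5 := rfl
private lemma sg66_a1 : sg66 1 = 4 := rfl
private lemma sg66_a2 : sg66 2 = 3 := rfl
private lemma sg66_a3 : sg66 3 = 0 := rfl
private lemma sg66_a4 : sg66 4 = 1 := rfl
private lemma sg66_a5 : sg66 5 = 2 := rfl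
private lemma sg66_sign : (Equiv.Perm.sign sg66 : ℤ) = 1 := by decide
private def sg67 : Equiv.Perm (Fin 6) := ⟨![5,4,3,0,2,1], ![3,5,4,2,1,0], by decide, by decide⟩
private lemma sg67_a0 : sg67 0 = 5 := rfl
private lemma sg67_a1 : sg67 1 = 4 := rfl
private lemma sg67_a2 : sg67 2 = 3 := rfl
private lemma sg67_a3 : sg67 3 = 0 := rfl
private lemma sg67_a4 : sg67 4 = 2 := rfl
private lemma sg67_a5 : sg67 5 = 1 := rfl
private lemma sg67_sign : (Equiv.Perm.sign sg67 : ℤ) = -1 := by decide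
private def sg68 : Equiv.Perm (Fin 6) := ⟨![5,4,3,1,0,2], ![4,3,5,2,1,0], by decide, by decide⟩
private lemma sg68_a0 : sg68 0 = 5 := rfl
private lemma sg68_a1 : sg68 1 = 4 := rfl
private lemma sg68_a2 : sg68 2 = 3 := rfl
private lemma sg68_a3 : sg68 3 = 1 := rfl
private lemma sg68_a4 : sg68 4 = 0 := rfl
private lemma sg68_a5 : sg68 5 = 2 := rfl
private lemma sg68_sign : (Equiv.Perm.sign sg68 : ℤ) = -1 := by decide
private def sg69 : Equiv.Perm (Fin 6) := ⟨![5,4,3,1,2,0], ![5,3,4,2,1,0], by decide, by decide⟩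
private lemma sg69_a0 : sg69 0 = 5 := rfl
private lemma sg69_a1 : sg69 1 = 4 := rfl
private lemma sg69_a2 : sg69 2 = 3 := rfl
private lemma sg69_a3 : sg69 3 = 1 := rfl
private lemma sg69_a4 : sg69 4 = 2 := rfl
private lemma sg69_a5 : sg69 5 = 0 := rfl
private lemma sg69_sign : (Equiv.Perm.sign sg69 : ℤ) = 1 := by decide
private def sg70 : Equiv.Perm (Fin 6) := ⟨![5,4,3,2,0,1], ![4,5,3,2,1,0], by decide, by decide⟩
private lemma sg70_a0 : sg70 0 = 5 := rfl
private lemma sg70_a1 : sg70 1 = 4 := rfl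
private lemma sg70_a2 : sg70 2 = 3 := rfl
private lemma sg70_a3 : sg70 3 = 2 := rfl
private lemma sg70_a4 : sg70 4 = 0 := rfl
private lemma sg70_a5 : sg70 5 = 1 := rfl
private lemma sg70_sign : (Equiv.Perm.sign sg70 : ℤ) = 1 := by decide
private def sg71 : Equiv.Perm (Fin 6) := ⟨![5,4,3,2,1,0], ![5,4,3,2,1,0], by decide, by decide⟩
private lemma sg71_a0 : sg71 0 = 5 := rfl
private lemma sg71_a1 : sg71 1 = 4 := rfl
private lemma sg71_a2 : sg71 2 = 3 := rfl
private lemma sg71_a3 : sg71 3 = 2 := rfl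
private lemma sg71_a4 : sg71 4 = 1 := rfl
private lemma sg71_a5 : sg71 5 = 0 := rfl
private lemma sg71_sign : (Equiv.Perm.sign sg71 : ℤ) = -1 := by decide
private def sg72 : Equiv.Perm (Fin 6) := ⟨![0,1,2,4,3,5], ![0,1,2,4,3,5], by decide, by decide⟩
private lemma sg72_a0 : sg72 0 = 0 := rfl
private lemma sg72_a1 : sg72 1 = 1 := rfl
private lemma sg72_a2 : sg72 2 = 2 := rfl
private lemma sg72_a3 : sg72 3 = 4 := rfl
private lemma sg72_a4 : sg72 4 = 3 := rfl
private lemma sg72_a5 : sg72 5 = 5 := rfl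
private lemma sg72_sign : (Equiv.Perm.sign sg72 : ℤ) = -1 := by decide
private def sg73 : Equiv.Perm (Fin 6) := ⟨![0,1,3,2,4,5], ![0,1,3,2,4,5], by decide, by decide⟩
private lemma sg73_a0 : sg73 0 = 0 := rfl
private lemma sg73_a1 : sg73 1 = 1 := rfl
private lemma sg73_a2 : sg73 2 = 3 := rfl
private lemma sg73_a3 : sg73 3 = 2 := rfl
private lemma sg73_a4 : sg73 4 = 4 := rfl
private lemma sg73_a5 : sg73 5 = 5 := rfl
private lemma sg73_sign : (Equiv.Perm.sign sg73 : ℤ) = -1 := by decide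
private def sg74 : Equiv.Perm (Fin 6) := ⟨![0,1,3,4,2,5], ![0,1,4,2,3,5], by decide, by decide⟩
private lemma sg74_a0 : sg74 0 = 0 := rfl
private lemma sg74_a1 : sg74 1 = 1 := rfl
private lemma sg74_a2 : sg74 2 = 3 := rfl
private lemma sg74_a3 : sg74 3 = 4 := rfl
private lemma sg74_a4 : sg74 4 = 2 := rfl
private lemma sg74_a5 : sg74 5 = 5 := rfl
private lemma sg74_sign : (Equiv.Perm.sign sg74 : ℤ) = 1 := by decide
private def sg75 : Equiv.Perm (Fin 6) := ⟨![0,1,4,2,3,5], ![0,1,3,4,2,5], by decide, by decide⟩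
private lemma sg75_a0 : sg75 0 = 0 := rfl
private lemma sg75_a1 : sg75 1 = 1 := rfl
private lemma sg75_a2 : sg75 2 = 4 := rfl
private lemma sg75_a3 : sg75 3 = 2 := rfl
private lemma sg75_a4 : sg75 4 = 3 := rfl
private lemma sg75_a5 : sg75 5 = 5 := rfl
private lemma sg75_sign : (Equiv.Perm.sign sg75 : ℤ) = 1 := by decide
private def sg76 : Equiv.Perm (Fin 6) := ⟨![0,1,4,3,2,5], ![0,1,4,3,2,5], by decide, by decide⟩
private lemma sg76_a0 : sg76 0 = 0 := rfl
private lemma sg76_a1 : sg76 1 = 1 := rfl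
private lemma sg76_a2 : sg76 2 = 4 := rfl
private lemma sg76_a3 : sg76 3 = 3 := rfl
private lemma sg76_a4 : sg76 4 = 2 := rfl
private lemma sg76_a5 : sg76 5 = 5 := rfl
private lemma sg76_sign : (Equiv.Perm.sign sg76 : ℤ) = -1 := by decide
private def sg77 : Equiv.Perm (Fin 6) := ⟨![1,0,2,4,3,5], ![1,0,2,4,3,5], by decide, by decide⟩
private lemma sg77_a0 : sg77 0 = 1 := rfl
private lemma sg77_a1 : sg77 1 = 0 := rfl
private lemma sg77_a2 : sg77 2 = 2 := rfl
private lemma sg77_a3 : sg77 3 = 4 := rfl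
private lemma sg77_a4 : sg77 4 = 3 := rfl
private lemma sg77_a5 : sg77 5 = 5 := rfl
private lemma sg77_sign : (Equiv.Perm.sign sg77 : ℤ) = 1 := by decide
private def sg78 : Equiv.Perm (Fin 6) := ⟨![1,0,3,2,4,5], ![1,0,3,2,4,5], by decide, by decide⟩
private lemma sg78_a0 : sg78 0 = 1 := rfl
private lemma sg78_a1 : sg78 1 = 0 := rfl
private lemma sg78_a2 : sg78 2 = 3 := rfl
private lemma sg78_a3 : sg78 3 = 2 := rfl
private lemma sg78_a4 : sg78 4 = 4 := rfl
private lemma sg78_a5 : sg78 5 = 5 := rfl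
private lemma sg78_sign : (Equiv.Perm.sign sg78 : ℤ) = 1 := by decide
private def sg79 : Equiv.Perm (Fin 6) := ⟨![1,0,3,4,2,5], ![1,0,4,2,3,5], by decide, by decide⟩
private lemma sg79_a0 : sg79 0 = 1 := rfl
private lemma sg79_a1 : sg79 1 = 0 := rfl
private lemma sg79_a2 : sg79 2 = 3 := rfl
private lemma sg79_a3 : sg79 3 = 4 := rfl
private lemma sg79_a4 : sg79 4 = 2 := rfl
private lemma sg79_a5 : sg79 5 = 5 := rfl
private lemma sg79_sign : (Equiv.Perm.sign sg79 : ℤ) = -1 := by decide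
private def sg80 : Equiv.Perm (Fin 6) := ⟨![1,0,4,2,3,5], ![1,0,3,4,2,5], by decide, by decide⟩
private lemma sg80_a0 : sg80 0 = 1 := rfl
private lemma sg80_a1 : sg80 1 = 0 := rfl
private lemma sg80_a2 : sg80 2 = 4 := rfl
private lemma sg80_a3 : sg80 3 = 2 := rfl
private lemma sg80_a4 : sg80 4 = 3 := rfl
private lemma sg80_a5 : sg80 5 = 5 := rfl
private lemma sg80_sign : (Equiv.Perm.sign sg80 : ℤ) = -1 := by decide
private def sg81 : Equiv.Perm (Fin 6) := ⟨![1,0,4,3,2,5], ![1,0,4,3,2,5], by decide, by decide⟩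
private lemma sg81_a0 : sg81 0 = 1 := rfl
private lemma sg81_a1 : sg81 1 = 0 := rfl
private lemma sg81_a2 : sg81 2 = 4 := rfl
private lemma sg81_a3 : sg81 3 = 3 := rfl
private lemma sg81_a4 : sg81 4 = 2 := rfl
private lemma sg81_a5 : sg81 5 = 5 := rfl
private lemma sg81_sign : (Equiv.Perm.sign sg81 : ℤ) = 1 := by decide
private def sg82 : Equiv.Perm (Fin 6) := ⟨![0,1,5,2,3,4], ![0,1,3,4,5,2], by decide, by decide⟩
private lemma sg82_a0 : sg82 0 = 0 := rfl
private lemma sg82_a1 : sg82 1 = 1 := rfl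
private lemma sg82_a2 : sg82 2 = 5 := rfl
private lemma sg82_a3 : sg82 3 = 2 := rfl
private lemma sg82_a4 : sg82 4 = 3 := rfl
private lemma sg82_a5 : sg82 5 = 4 := rfl
private lemma sg82_sign : (Equiv.Perm.sign sg82 : ℤ) = -1 := by decide
private def sg83 : Equiv.Perm (Fin 6) := ⟨![0,1,5,2,4,3], ![0,1,3,5,4,2], by decide, by decide⟩
private lemma sg83_a0 : sg83 0 = 0 := rfl
private lemma sg83_a1 : sg83 1 = 1 := rfl
private lemma sg83_a2 : sg83 2 = 5 := rfl
private lemma sg83_a3 : sg83 3 = 2 := rfl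
private lemma sg83_a4 : sg83 4 = 4 := rfl
private lemma sg83_a5 : sg83 5 = 3 := rfl
private lemma sg83_sign : (Equiv.Perm.sign sg83 : ℤ) = 1 := by decide
private def sg84 : Equiv.Perm (Fin 6) := ⟨![0,1,5,3,2,4], ![0,1,4,3,5,2], by decide, by decide⟩
private lemma sg84_a0 : sg84 0 = 0 := rfl
private lemma sg84_a1 : sg84 1 = 1 := rfl
private lemma sg84_a2 : sg84 2 = 5 := rfl
private lemma sg84_a3 : sg84 3 = 3 := rfl
private lemma sg84_a4 : sg84 4 = 2 := rfl
private lemma sg84_a5 : sg84 5 = 4 := rfl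
private lemma sg84_sign : (Equiv.Perm.sign sg84 : ℤ) = 1 := by decide
private def sg85 : Equiv.Perm (Fin 6) := ⟨![0,1,5,3,4,2], ![0,1,5,3,4,2], by decide, by decide⟩
private lemma sg85_a0 : sg85 0 = 0 := rfl
private lemma sg85_a1 : sg85 1 = 1 := rfl
private lemma sg85_a2 : sg85 2 = 5 := rfl
private lemma sg85_a3 : sg85 3 = 3 := rfl
private lemma sg85_a4 : sg85 4 = 4 := rfl
private lemma sg85_a5 : sg85 5 = 2 := rfl
private lemma sg85_sign : (Equiv.Perm.sign sg85 : ℤ) = -1 := by decide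
private def sg86 : Equiv.Perm (Fin 6) := ⟨![0,1,5,4,2,3], ![0,1,4,5,3,2], by decide, by decide⟩
private lemma sg86_a0 : sg86 0 = 0 := rfl
private lemma sg86_a1 : sg86 1 = 1 := rfl
private lemma sg86_a2 : sg86 2 = 5 := rfl
private lemma sg86_a3 : sg86 3 = 4 := rfl
private lemma sg86_a4 : sg86 4 = 2 := rfl
private lemma sg86_a5 : sg86 5 = 3 := rfl
private lemma sg86_sign : (Equiv.Perm.sign sg86 : ℤ) = -1 := by decide
private def sg87 : Equiv.Perm (Fin 6) := ⟨![0,1,5,4,3,2], ![0,1,5,4,3,2], by decide, by decide⟩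
private lemma sg87_a0 : sg87 0 = 0 := rfl
private lemma sg87_a1 : sg87 1 = 1 := rfl
private lemma sg87_a2 : sg87 2 = 5 := rfl
private lemma sg87_a3 : sg87 3 = 4 := rfl
private lemma sg87_a4 : sg87 4 = 3 := rfl
private lemma sg87_a5 : sg87 5 = 2 := rfl
private lemma sg87_sign : (Equiv.Perm.sign sg87 : ℤ) = 1 := by decide
private def sg88 : Equiv.Perm (Fin 6) := ⟨![1,0,5,2,3,4], ![1,0,3,4,5,2], by decide, by decide⟩
private lemma sg88_a0 : sg88 0 = 1 := rfl
private lemma sg88_a1 : sg88 1 = 0 := rfl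
private lemma sg88_a2 : sg88 2 = 5 := rfl
private lemma sg88_a3 : sg88 3 = 2 := rfl
private lemma sg88_a4 : sg88 4 = 3 := rfl
private lemma sg88_a5 : sg88 5 = 4 := rfl
private lemma sg88_sign : (Equiv.Perm.sign sg88 : ℤ) = 1 := by decide
private def sg89 : Equiv.Perm (Fin 6) := ⟨![1,0,5,2,4,3], ![1,0,3,5,4,2], by decide, by decide⟩
private lemma sg89_a0 : sg89 0 = 1 := rfl
private lemma sg89_a1 : sg89 1 = 0 := rfl
private lemma sg89_a2 : sg89 2 = 5 := rfl
private lemma sg89_a3 : sg89 3 = 2 := rfl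
private lemma sg89_a4 : sg89 4 = 4 := rfl
private lemma sg89_a5 : sg89 5 = 3 := rfl
private lemma sg89_sign : (Equiv.Perm.sign sg89 : ℤ) = -1 := by decide
private def sg90 : Equiv.Perm (Fin 6) := ⟨![1,0,5,3,2,4], ![1,0,4,3,5,2], by decide, by decide⟩
private lemma sg90_a0 : sg90 0 = 1 := rfl
private lemma sg90_a1 : sg90 1 = 0 := rfl
private lemma sg90_a2 : sg90 2 = 5 := rfl
private lemma sg90_a3 : sg90 3 = 3 := rfl
private lemma sg90_a4 : sg90 4 = 2 := rfl
private lemma sg90_a5 : sg90 5 = 4 := rfl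
private lemma sg90_sign : (Equiv.Perm.sign sg90 : ℤ) = -1 := by decide
private def sg91 : Equiv.Perm (Fin 6) := ⟨![1,0,5,3,4,2], ![1,0,5,3,4,2], by decide, by decide⟩
private lemma sg91_a0 : sg91 0 = 1 := rfl
private lemma sg91_a1 : sg91 1 = 0 := rfl
private lemma sg91_a2 : sg91 2 = 5 := rfl
private lemma sg91_a3 : sg91 3 = 3 := rfl
private lemma sg91_a4 : sg91 4 = 4 := rfl
private lemma sg91_a5 : sg91 5 = 2 := rfl
private lemma sg91_sign : (Equiv.Perm.sign sg91 : ℤ) = 1 := by decide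
private def sg92 : Equiv.Perm (Fin 6) := ⟨![1,0,5,4,2,3], ![1,0,4,5,3,2], by decide, by decide⟩
private lemma sg92_a0 : sg92 0 = 1 := rfl
private lemma sg92_a1 : sg92 1 = 0 := rfl
private lemma sg92_a2 : sg92 2 = 5 := rfl
private lemma sg92_a3 : sg92 3 = 4 := rfl
private lemma sg92_a4 : sg92 4 = 2 := rfl
private lemma sg92_a5 : sg92 5 = 3 := rfl
private lemma sg92_sign : (Equiv.Perm.sign sg92 : ℤ) = 1 := by decide
private def sg93 : Equiv.Perm (Fin 6) := ⟨![1,0,5,4,3,2], ![1,0,5,4,3,2], by decide, by decide⟩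
private lemma sg93_a0 : sg93 0 = 1 := rfl
private lemma sg93_a1 : sg93 1 = 0 := rfl
private lemma sg93_a2 : sg93 2 = 5 := rfl
private lemma sg93_a3 : sg93 3 = 4 := rfl
private lemma sg93_a4 : sg93 4 = 3 := rfl
private lemma sg93_a5 : sg93 5 = 2 := rfl
private lemma sg93_sign : (Equiv.Perm.sign sg93 : ℤ) = -1 := by decide
private def sg94 : Equiv.Perm (Fin 6) := ⟨![2,3,4,0,1,5], ![3,4,0,1,2,5], by decide, by decide⟩
private lemma sg94_a0 : sg94 0 = 2 := rfl
private lemma sg94_a1 : sg94 1 = 3 := rfl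
private lemma sg94_a2 : sg94 2 = 4 := rfl
private lemma sg94_a3 : sg94 3 = 0 := rfl
private lemma sg94_a4 : sg94 4 = 1 := rfl
private lemma sg94_a5 : sg94 5 = 5 := rfl
private lemma sg94_sign : (Equiv.Perm.sign sg94 : ℤ) = 1 := by decide
private def sg95 : Equiv.Perm (Fin 6) := ⟨![2,3,4,1,0,5], ![4,3,0,1,2,5], by decide, by decide⟩
private lemma sg95_a0 : sg95 0 = 2 := rfl
private lemma sg95_a1 : sg95 1 = 3 := rfl
private lemma sg95_a2 : sg95 2 = 4 := rfl
private lemma sg95_a3 : sg95 3 = 1 := rfl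
private lemma sg95_a4 : sg95 4 = 0 := rfl
private lemma sg95_a5 : sg95 5 = 5 := rfl
private lemma sg95_sign : (Equiv.Perm.sign sg95 : ℤ) = -1 := by decide
private def sg96 : Equiv.Perm (Fin 6) := ⟨![2,4,3,0,1,5], ![3,4,0,2,1,5], by decide, by decide⟩
private lemma sg96_a0 : sg96 0 = 2 := rfl
private lemma sg96_a1 : sg96 1 = 4 := rfl
private lemma sg96_a2 : sg96 2 = 3 := rfl
private lemma sg96_a3 : sg96 3 = 0 := rfl
private lemma sg96_a4 : sg96 4 = 1 := rfl
private lemma sg96_a5 : sg96 5 = 5 := rfl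
private lemma sg96_sign : (Equiv.Perm.sign sg96 : ℤ) = -1 := by decide
private def sg97 : Equiv.Perm (Fin 6) := ⟨![2,4,3,1,0,5], ![4,3,0,2,1,5], by decide, by decide⟩
private lemma sg97_a0 : sg97 0 = 2 := rfl
private lemma sg97_a1 : sg97 1 = 4 := rfl
private lemma sg97_a2 : sg97 2 = 3 := rfl
private lemma sg97_a3 : sg97 3 = 1 := rfl
private lemma sg97_a4 : sg97 4 = 0 := rfl
private lemma sg97_a5 : sg97 5 = 5 := rfl
private lemma sg97_sign : (Equiv.Perm.sign sg97 : ℤ) = 1 := by decide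
private def sg98 : Equiv.Perm (Fin 6) := ⟨![3,2,4,0,1,5], ![3,4,1,0,2,5], by decide, by decide⟩
private lemma sg98_a0 : sg98 0 = 3 := rfl
private lemma sg98_a1 : sg98 1 = 2 := rfl
private lemma sg98_a2 : sg98 2 = 4 := rfl
private lemma sg98_a3 : sg98 3 = 0 := rfl
private lemma sg98_a4 : sg98 4 = 1 := rfl
private lemma sg98_a5 : sg98 5 = 5 := rfl
private lemma sg98_sign : (Equiv.Perm.sign sg98 : ℤ) = -1 := by decide
private def sg99 : Equiv.Perm (Fin 6) := ⟨![3,2,4,1,0,5], ![4,3,1,0,2,5], by decide, by decide⟩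
private lemma sg99_a0 : sg99 0 = 3 := rfl
private lemma sg99_a1 : sg99 1 = 2 := rfl
private lemma sg99_a2 : sg99 2 = 4 := rfl
private lemma sg99_a3 : sg99 3 = 1 := rfl
private lemma sg99_a4 : sg99 4 = 0 := rfl
private lemma sg99_a5 : sg99 5 = 5 := rfl
private lemma sg99_sign : (Equiv.Perm.sign sg99 : ℤ) = 1 := by decide
private def sg100 : Equiv.Perm (Fin 6) := ⟨![3,4,2,0,1,5], ![3,4,2,0,1,5], by decide, by decide⟩
private lemma sg100_a0 : sg100 0 = 3 := rfl
private lemma sg100_a1 : sg100 1 = 4 := rfl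
private lemma sg100_a2 : sg100 2 = 2 := rfl
private lemma sg100_a3 : sg100 3 = 0 := rfl
private lemma sg100_a4 : sg100 4 = 1 := rfl
private lemma sg100_a5 : sg100 5 = 5 := rfl
private lemma sg100_sign : (Equiv.Perm.sign sg100 : ℤ) = 1 := by decide
private def sg101 : Equiv.Perm (Fin 6) := ⟨![3,4,2,1,0,5], ![4,3,2,0,1,5], by decide, by decide⟩
private lemma sg101_a0 : sg101 0 = 3 := rfl
private lemma sg101_a1 : sg101 1 = 4 := rfl
private lemma sg101_a2 : sg101 2 = 2 := rfl
private lemma sg101_a3 : sg101 3 = 1 := rfl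
private lemma sg101_a4 : sg101 4 = 0 := rfl
private lemma sg101_a5 : sg101 5 = 5 := rfl
private lemma sg101_sign : (Equiv.Perm.sign sg101 : ℤ) = -1 := by decide
private def sg102 : Equiv.Perm (Fin 6) := ⟨![4,2,3,0,1,5], ![3,4,1,2,0,5], by decide, by decide⟩
private lemma sg102_a0 : sg102 0 = 4 := rfl
private lemma sg102_a1 : sg102 1 = 2 := rfl
private lemma sg102_a2 : sg102 2 = 3 := rfl
private lemma sg102_a3 : sg102 3 = 0 := rfl
private lemma sg102_a4 : sg102 4 = 1 := rfl
private lemma sg102_a5 : sg102 5 = 5 := rfl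
private lemma sg102_sign : (Equiv.Perm.sign sg102 : ℤ) = 1 := by decide
private def sg103 : Equiv.Perm (Fin 6) := ⟨![4,2,3,1,0,5], ![4,3,1,2,0,5], by decide, by decide⟩
private lemma sg103_a0 : sg103 0 = 4 := rfl
private lemma sg103_a1 : sg103 1 = 2 := rfl
private lemma sg103_a2 : sg103 2 = 3 := rfl
private lemma sg103_a3 : sg103 3 = 1 := rfl
private lemma sg103_a4 : sg103 4 = 0 := rfl
private lemma sg103_a5 : sg103 5 = 5 := rfl
private lemma sg103_sign : (Equiv.Perm.sign sg103 : ℤ) = -1 := by decide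
private def sg104 : Equiv.Perm (Fin 6) := ⟨![2,3,4,5,0,1], ![4,5,0,1,2,3], by decide, by decide⟩
private lemma sg104_a0 : sg104 0 = 2 := rfl
private lemma sg104_a1 : sg104 1 = 3 := rfl
private lemma sg104_a2 : sg104 2 = 4 := rfl
private lemma sg104_a3 : sg104 3 = 5 := rfl
private lemma sg104_a4 : sg104 4 = 0 := rfl
private lemma sg104_a5 : sg104 5 = 1 := rfl
private lemma sg104_sign : (Equiv.Perm.sign sg104 : ℤ) = 1 := by decide
private def sg105 : Equiv.Perm (Fin 6) := ⟨![2,3,4,5,1,0], ![5,4,0,1,2,3], by decide, by decide⟩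
private lemma sg105_a0 : sg105 0 = 2 := rfl
private lemma sg105_a1 : sg105 1 = 3 := rfl
private lemma sg105_a2 : sg105 2 = 4 := rfl
private lemma sg105_a3 : sg105 3 = 5 := rfl
private lemma sg105_a4 : sg105 4 = 1 := rfl
private lemma sg105_a5 : sg105 5 = 0 := rfl
private lemma sg105_sign : (Equiv.Perm.sign sg105 : ℤ) = -1 := by decide
private def sg106 : Equiv.Perm (Fin 6) := ⟨![2,4,3,5,0,1], ![4,5,0,2,1,3], by decide, by decide⟩
private lemma sg106_a0 : sg106 0 = 2 := rfl
private lemma sg106_a1 : sg106 1 = 4 := rfl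
private lemma sg106_a2 : sg106 2 = 3 := rfl
private lemma sg106_a3 : sg106 3 = 5 := rfl
private lemma sg106_a4 : sg106 4 = 0 := rfl
private lemma sg106_a5 : sg106 5 = 1 := rfl
private lemma sg106_sign : (Equiv.Perm.sign sg106 : ℤ) = -1 := by decide
private def sg107 : Equiv.Perm (Fin 6) := ⟨![2,4,3,5,1,0], ![5,4,0,2,1,3], by decide, by decide⟩
private lemma sg107_a0 : sg107 0 = 2 := rfl
private lemma sg107_a1 : sg107 1 = 4 := rfl
private lemma sg107_a2 : sg107 2 = 3 := rfl
private lemma sg107_a3 : sg107 3 = 5 := rfl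
private lemma sg107_a4 : sg107 4 = 1 := rfl
private lemma sg107_a5 : sg107 5 = 0 := rfl
private lemma sg107_sign : (Equiv.Perm.sign sg107 : ℤ) = 1 := by decide
private def sg108 : Equiv.Perm (Fin 6) := ⟨![3,2,4,5,0,1], ![4,5,1,0,2,3], by decide, by decide⟩
private lemma sg108_a0 : sg108 0 = 3 := rfl
private lemma sg108_a1 : sg108 1 = 2 := rfl
private lemma sg108_a2 : sg108 2 = 4 := rfl
private lemma sg108_a3 : sg108 3 = 5 := rfl
private lemma sg108_a4 : sg108 4 = 0 := rfl
private lemma sg108_a5 : sg108 5 = 1 := rfl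
private lemma sg108_sign : (Equiv.Perm.sign sg108 : ℤ) = -1 := by decide
private def sg109 : Equiv.Perm (Fin 6) := ⟨![3,2,4,5,1,0], ![5,4,1,0,2,3], by decide, by decide⟩
private lemma sg109_a0 : sg109 0 = 3 := rfl
private lemma sg109_a1 : sg109 1 = 2 := rfl
private lemma sg109_a2 : sg109 2 = 4 := rfl
private lemma sg109_a3 : sg109 3 = 5 := rfl
private lemma sg109_a4 : sg109 4 = 1 := rfl
private lemma sg109_a5 : sg109 5 = 0 := rfl
private lemma sg109_sign : (Equiv.Perm.sign sg109 : ℤ) = 1 := by decide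
private def sg110 : Equiv.Perm (Fin 6) := ⟨![3,4,2,5,0,1], ![4,5,2,0,1,3], by decide, by decide⟩
private lemma sg110_a0 : sg110 0 = 3 := rfl
private lemma sg110_a1 : sg110 1 = 4 := rfl
private lemma sg110_a2 : sg110 2 = 2 := rfl
private lemma sg110_a3 : sg110 3 = 5 := rfl
private lemma sg110_a4 : sg110 4 = 0 := rfl
private lemma sg110_a5 : sg110 5 = 1 := rfl
private lemma sg110_sign : (Equiv.Perm.sign sg110 : ℤ) = 1 := by decide
private def sg111 : Equiv.Perm (Fin 6) := ⟨![3,4,2,5,1,0], ![5,4,2,0,1,3], by decide, by decide⟩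
private lemma sg111_a0 : sg111 0 = 3 := rfl
private lemma sg111_a1 : sg111 1 = 4 := rfl
private lemma sg111_a2 : sg111 2 = 2 := rfl
private lemma sg111_a3 : sg111 3 = 5 := rfl
private lemma sg111_a4 : sg111 4 = 1 := rfl
private lemma sg111_a5 : sg111 5 = 0 := rfl
private lemma sg111_sign : (Equiv.Perm.sign sg111 : ℤ) = -1 := by decide
private def sg112 : Equiv.Perm (Fin 6) := ⟨![4,2,3,5,0,1], ![4,5,1,2,0,3], by decide, by decide⟩
private lemma sg112_a0 : sg112 0 = 4 := rfl
private lemma sg112_a1 : sg112 1 = 2 := rfl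
private lemma sg112_a2 : sg112 2 = 3 := rfl
private lemma sg112_a3 : sg112 3 = 5 := rfl
private lemma sg112_a4 : sg112 4 = 0 := rfl
private lemma sg112_a5 : sg112 5 = 1 := rfl
private lemma sg112_sign : (Equiv.Perm.sign sg112 : ℤ) = 1 := by decide
private def sg113 : Equiv.Perm (Fin 6) := ⟨![4,2,3,5,1,0], ![5,4,1,2,0,3], by decide, by decide⟩
private lemma sg113_a0 : sg113 0 = 4 := rfl
private lemma sg113_a1 : sg113 1 = 2 := rfl
private lemma sg113_a2 : sg113 2 = 3 := rfl
private lemma sg113_a3 : sg113 3 = 5 := rfl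
private lemma sg113_a4 : sg113 4 = 1 := rfl
private lemma sg113_a5 : sg113 5 = 0 := rfl
private lemma sg113_sign : (Equiv.Perm.sign sg113 : ℤ) = -1 := by decide
private def sg114 : Equiv.Perm (Fin 6) := ⟨![4,3,2,5,0,1], ![4,5,2,1,0,3], by decide, by decide⟩
private lemma sg114_a0 : sg114 0 = 4 := rfl
private lemma sg114_a1 : sg114 1 = 3 := rfl
private lemma sg114_a2 : sg114 2 = 2 := rfl
private lemma sg114_a3 : sg114 3 = 5 := rfl
private lemma sg114_a4 : sg114 4 = 0 := rfl
private lemma sg114_a5 : sg114 5 = 1 := rfl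
private lemma sg114_sign : (Equiv.Perm.sign sg114 : ℤ) = -1 := by decide
private def sg115 : Equiv.Perm (Fin 6) := ⟨![4,3,2,5,1,0], ![5,4,2,1,0,3], by decide, by decide⟩
private lemma sg115_a0 : sg115 0 = 4 := rfl
private lemma sg115_a1 : sg115 1 = 3 := rfl
private lemma sg115_a2 : sg115 2 = 2 := rfl
private lemma sg115_a3 : sg115 3 = 5 := rfl
private lemma sg115_a4 : sg115 4 = 1 := rfl
private lemma sg115_a5 : sg115 5 = 0 := rfl
private lemma sg115_sign : (Equiv.Perm.sign sg115 : ℤ) = 1 := by decide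
private def sg116 : Equiv.Perm (Fin 6) := ⟨![5,0,1,2,4,3], ![1,2,3,5,4,0], by decide, by decide⟩
private lemma sg116_a0 : sg116 0 = 5 := rfl
private lemma sg116_a1 : sg116 1 = 0 := rfl
private lemma sg116_a2 : sg116 2 = 1 := rfl
private lemma sg116_a3 : sg116 3 = 2 := rfl
private lemma sg116_a4 : sg116 4 = 4 := rfl
private lemma sg116_a5 : sg116 5 = 3 := rfl
private lemma sg116_sign : (Equiv.Perm.sign sg116 : ℤ) = 1 := by decide
private def sg117 : Equiv.Perm (Fin 6) := ⟨![5,0,1,3,2,4], ![1,2,4,3,5,0], by decide, by decide⟩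
private lemma sg117_a0 : sg117 0 = 5 := rfl
private lemma sg117_a1 : sg117 1 = 0 := rfl
private lemma sg117_a2 : sg117 2 = 1 := rfl
private lemma sg117_a3 : sg117 3 = 3 := rfl
private lemma sg117_a4 : sg117 4 = 2 := rfl
private lemma sg117_a5 : sg117 5 = 4 := rfl
private lemma sg117_sign : (Equiv.Perm.sign sg117 : ℤ) = 1 := by decide
private def sg118 : Equiv.Perm (Fin 6) := ⟨![5,0,1,3,4,2], ![1,2,5,3,4,0], by decide, by decide⟩
private lemma sg118_a0 : sg118 0 = 5 := rfl
private lemma sg118_a1 : sg118 1 = 0 := rfl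
private lemma sg118_a2 : sg118 2 = 1 := rfl
private lemma sg118_a3 : sg118 3 = 3 := rfl
private lemma sg118_a4 : sg118 4 = 4 := rfl
private lemma sg118_a5 : sg118 5 = 2 := rfl
private lemma sg118_sign : (Equiv.Perm.sign sg118 : ℤ) = -1 := by decide
private def sg119 : Equiv.Perm (Fin 6) := ⟨![5,0,1,4,2,3], ![1,2,4,5,3,0], by decide, by decide⟩
private lemma sg119_a0 : sg119 0 = 5 := rfl
private lemma sg119_a1 : sg119 1 = 0 := rfl
private lemma sg119_a2 : sg119 2 = 1 := rfl
private lemma sg119_a3 : sg119 3 = 4 := rfl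
private lemma sg119_a4 : sg119 4 = 2 := rfl
private lemma sg119_a5 : sg119 5 = 3 := rfl
private lemma sg119_sign : (Equiv.Perm.sign sg119 : ℤ) = -1 := by decide
private def sg120 : Equiv.Perm (Fin 6) := ⟨![5,0,1,4,3,2], ![1,2,5,4,3,0], by decide, by decide⟩
private lemma sg120_a0 : sg120 0 = 5 := rfl
private lemma sg120_a1 : sg120 1 = 0 := rfl
private lemma sg120_a2 : sg120 2 = 1 := rfl
private lemma sg120_a3 : sg120 3 = 4 := rfl
private lemma sg120_a4 : sg120 4 = 3 := rfl
private lemma sg120_a5 : sg120 5 = 2 := rfl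
private lemma sg120_sign : (Equiv.Perm.sign sg120 : ℤ) = 1 := by decide
private def sg121 : Equiv.Perm (Fin 6) := ⟨![5,1,0,2,4,3], ![2,1,3,5,4,0], by decide, by decide⟩
private lemma sg121_a0 : sg121 0 = 5 := rfl
private lemma sg121_a1 : sg121 1 = 1 := rfl
private lemma sg121_a2 : sg121 2 = 0 := rfl
private lemma sg121_a3 : sg121 3 = 2 := rfl
private lemma sg121_a4 : sg121 4 = 4 := rfl
private lemma sg121_a5 : sg121 5 = 3 := rfl
private lemma sg121_sign : (Equiv.Perm.sign sg121 : ℤ) = -1 := by decide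
private def sg122 : Equiv.Perm (Fin 6) := ⟨![5,1,0,3,2,4], ![2,1,4,3,5,0], by decide, by decide⟩
private lemma sg122_a0 : sg122 0 = 5 := rfl
private lemma sg122_a1 : sg122 1 = 1 := rfl
private lemma sg122_a2 : sg122 2 = 0 := rfl
private lemma sg122_a3 : sg122 3 = 3 := rfl
private lemma sg122_a4 : sg122 4 = 2 := rfl
private lemma sg122_a5 : sg122 5 = 4 := rfl
private lemma sg122_sign : (Equiv.Perm.sign sg122 : ℤ) = -1 := by decide
private def sg123 : Equiv.Perm (Fin 6) := ⟨![5,1,0,3,4,2], ![2,1,5,3,4,0], by decide, by decide⟩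
private lemma sg123_a0 : sg123 0 = 5 := rfl
private lemma sg123_a1 : sg123 1 = 1 := rfl
private lemma sg123_a2 : sg123 2 = 0 := rfl
private lemma sg123_a3 : sg123 3 = 3 := rfl
private lemma sg123_a4 : sg123 4 = 4 := rfl
private lemma sg123_a5 : sg123 5 = 2 := rfl
private lemma sg123_sign : (Equiv.Perm.sign sg123 : ℤ) = 1 := by decide
private def sg124 : Equiv.Perm (Fin 6) := ⟨![5,1,0,4,2,3], ![2,1,4,5,3,0], by decide, by decide⟩
private lemma sg124_a0 : sg124 0 = 5 := rfl
private lemma sg124_a1 : sg124 1 = 1 := rfl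
private lemma sg124_a2 : sg124 2 = 0 := rfl
private lemma sg124_a3 : sg124 3 = 4 := rfl
private lemma sg124_a4 : sg124 4 = 2 := rfl
private lemma sg124_a5 : sg124 5 = 3 := rfl
private lemma sg124_sign : (Equiv.Perm.sign sg124 : ℤ) = 1 := by decide
private def sg125 : Equiv.Perm (Fin 6) := ⟨![5,1,0,4,3,2], ![2,1,5,4,3,0], by decide, by decide⟩
private lemma sg125_a0 : sg125 0 = 5 := rfl
private lemma sg125_a1 : sg125 1 = 1 := rfl
private lemma sg125_a2 : sg125 2 = 0 := rfl
private lemma sg125_a3 : sg125 3 = 4 := rfl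
private lemma sg125_a4 : sg125 4 = 3 := rfl
private lemma sg125_a5 : sg125 5 = 2 := rfl
private lemma sg125_sign : (Equiv.Perm.sign sg125 : ℤ) = -1 := by decide
private def sg126 : Equiv.Perm (Fin 6) := ⟨![5,2,3,4,0,1], ![4,5,1,2,3,0], by decide, by decide⟩
private lemma sg126_a0 : sg126 0 = 5 := rfl
private lemma sg126_a1 : sg126 1 = 2 := rfl
private lemma sg126_a2 : sg126 2 = 3 := rfl
private lemma sg126_a3 : sg126 3 = 4 := rfl
private lemma sg126_a4 : sg126 4 = 0 := rfl
private lemma sg126_a5 : sg126 5 = 1 := rfl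
private lemma sg126_sign : (Equiv.Perm.sign sg126 : ℤ) = -1 := by decide
private def sg127 : Equiv.Perm (Fin 6) := ⟨![5,2,3,4,1,0], ![5,4,1,2,3,0], by decide, by decide⟩
private lemma sg127_a0 : sg127 0 = 5 := rfl
private lemma sg127_a1 : sg127 1 = 2 := rfl
private lemma sg127_a2 : sg127 2 = 3 := rfl
private lemma sg127_a3 : sg127 3 = 4 := rfl
private lemma sg127_a4 : sg127 4 = 1 := rfl
private lemma sg127_a5 : sg127 5 = 0 := rfl
private lemma sg127_sign : (Equiv.Perm.sign sg127 : ℤ) = 1 := by decide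
private def sg128 : Equiv.Perm (Fin 6) := ⟨![5,2,4,3,0,1], ![4,5,1,3,2,0], by decide, by decide⟩
private lemma sg128_a0 : sg128 0 = 5 := rfl
private lemma sg128_a1 : sg128 1 = 2 := rfl
private lemma sg128_a2 : sg128 2 = 4 := rfl
private lemma sg128_a3 : sg128 3 = 3 := rfl
private lemma sg128_a4 : sg128 4 = 0 := rfl
private lemma sg128_a5 : sg128 5 = 1 := rfl
private lemma sg128_sign : (Equiv.Perm.sign sg128 : ℤ) = 1 := by decide
private def sg129 : Equiv.Perm (Fin 6) := ⟨![5,2,4,3,1,0], ![5,4,1,3,2,0], by decide, by decide⟩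
private lemma sg129_a0 : sg129 0 = 5 := rfl
private lemma sg129_a1 : sg129 1 = 2 := rfl
private lemma sg129_a2 : sg129 2 = 4 := rfl
private lemma sg129_a3 : sg129 3 = 3 := rfl
private lemma sg129_a4 : sg129 4 = 1 := rfl
private lemma sg129_a5 : sg129 5 = 0 := rfl
private lemma sg129_sign : (Equiv.Perm.sign sg129 : ℤ) = -1 := by decide
private def sg130 : Equiv.Perm (Fin 6) := ⟨![5,3,2,4,0,1], ![4,5,2,1,3,0], by decide, by decide⟩
private lemma sg130_a0 : sg130 0 = 5 := rfl
private lemma sg130_a1 : sg130 1 = 3 := rfl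
private lemma sg130_a2 : sg130 2 = 2 := rfl
private lemma sg130_a3 : sg130 3 = 4 := rfl
private lemma sg130_a4 : sg130 4 = 0 := rfl
private lemma sg130_a5 : sg130 5 = 1 := rfl
private lemma sg130_sign : (Equiv.Perm.sign sg130 : ℤ) = 1 := by decide
private def sg131 : Equiv.Perm (Fin 6) := ⟨![5,3,2,4,1,0], ![5,4,2,1,3,0], by decide, by decide⟩
private lemma sg131_a0 : sg131 0 = 5 := rfl
private lemma sg131_a1 : sg131 1 = 3 := rfl
private lemma sg131_a2 : sg131 2 = 2 := rfl
private lemma sg131_a3 : sg131 3 = 4 := rfl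
private lemma sg131_a4 : sg131 4 = 1 := rfl
private lemma sg131_a5 : sg131 5 = 0 := rfl
private lemma sg131_sign : (Equiv.Perm.sign sg131 : ℤ) = -1 := by decide
private def sg132 : Equiv.Perm (Fin 6) := ⟨![5,3,4,2,0,1], ![4,5,3,1,2,0], by decide, by decide⟩
private lemma sg132_a0 : sg132 0 = 5 := rfl
private lemma sg132_a1 : sg132 1 = 3 := rfl
private lemma sg132_a2 : sg132 2 = 4 := rfl
private lemma sg132_a3 : sg132 3 = 2 := rfl
private lemma sg132_a4 : sg132 4 = 0 := rfl
private lemma sg132_a5 : sg132 5 = 1 := rfl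
private lemma sg132_sign : (Equiv.Perm.sign sg132 : ℤ) = -1 := by decide
private def sg133 : Equiv.Perm (Fin 6) := ⟨![5,3,4,2,1,0], ![5,4,3,1,2,0], by decide, by decide⟩
private lemma sg133_a0 : sg133 0 = 5 := rfl
private lemma sg133_a1 : sg133 1 = 3 := rfl
private lemma sg133_a2 : sg133 2 = 4 := rfl
private lemma sg133_a3 : sg133 3 = 2 := rfl
private lemma sg133_a4 : sg133 4 = 1 := rfl
private lemma sg133_a5 : sg133 5 = 0 := rfl
private lemma sg133_sign : (Equiv.Perm.sign sg133 : ℤ) = 1 := by decide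
private def sg134 : Equiv.Perm (Fin 6) := ⟨![5,4,2,3,0,1], ![4,5,2,3,1,0], by decide, by decide⟩
private lemma sg134_a0 : sg134 0 = 5 := rfl
private lemma sg134_a1 : sg134 1 = 4 := rfl
private lemma sg134_a2 : sg134 2 = 2 := rfl
private lemma sg134_a3 : sg134 3 = 3 := rfl
private lemma sg134_a4 : sg134 4 = 0 := rfl
private lemma sg134_a5 : sg134 5 = 1 := rfl
private lemma sg134_sign : (Equiv.Perm.sign sg134 : ℤ) = -1 := by decide
private def sg135 : Equiv.Perm (Fin 6) := ⟨![5,4,2,3,1,0], ![5,4,2,3,1,0], by decide, by decide⟩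
private lemma sg135_a0 : sg135 0 = 5 := rfl
private lemma sg135_a1 : sg135 1 = 4 := rfl
private lemma sg135_a2 : sg135 2 = 2 := rfl
private lemma sg135_a3 : sg135 3 = 3 := rfl
private lemma sg135_a4 : sg135 4 = 1 := rfl
private lemma sg135_a5 : sg135 5 = 0 := rfl
private lemma sg135_sign : (Equiv.Perm.sign sg135 : ℤ) = 1 := by decide

set_option maxHeartbeats 4000000 in
private lemma expandL {R : Type*} [Ring R] (a b0 b1 b2 b3 b4 b5 : R) :
    nambu ![nambu ![a, nambu ![b0, b1, b2], b3], b4, b5] =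
      a * b0 * b1 * b2 * b3 * b4 * b5 - a * b0 * b2 * b1 * b3 * b4 * b5 - a * b1 * b0 * b2 * b3 * b4 * b5 + a * b1 * b2 * b0 * b3 * b4 * b5 + a * b2 * b0 * b1 * b3 * b4 * b5 - a * b2 * b1 * b0 * b3 * b4 * b5 - a * b3 * b0 * b1 * b2 * b4 * b5 + a * b3 * b0 * b2 * b1 * b4 * b5 + a * b3 * b1 * b0 * b2 * b4 * b5 - a * b3 * b1 * b2 * b0 * b4 * b5 - a * b3 * b2 * b0 * b1 * b4 * b5 + a * b3 * b2 * b1 * b0 * b4 * b5 - b0 * b1 * b2 * a * b3 * b4 * b5 + b0 * b2 * b1 * a * b3 * b4 * b5 + b1 * b0 * b2 * a * b3 * b4 * b5 - b1 * b2 * b0 * a * b3 * b4 * b5 - b2 * b0 * b1 * a * b3 * b4 * b5 + b2 * b1 * b0 * a * b3 * b4 * b5 + b0 * b1 * b2 * b3 * a * b4 * b5 - b0 * b2 * b1 * b3 * a * b4 * b5 - b1 * b0 * b2 * b3 * a * b4 * b5 + b1 * b2 * b0 * b3 * a * b4 * b5 + b2 * b0 * b1 * b3 * a * b4 * b5 -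 b2 * b1 * b0 * b3 * a * b4 * b5 + b3 * a * b0 * b1 * b2 * b4 * b5 - b3 * a * b0 * b2 * b1 * b4 * b5 - b3 * a * b1 * b0 * b2 * b4 * b5 + b3 * a * b1 * b2 * b0 * b4 * b5 + b3 * a * b2 * b0 * b1 * b4 * b5 - b3 * a * b2 * b1 * b0 * b4 * b5 - b3 * b0 * b1 * b2 * a * b4 * b5 + b3 * b0 * b2 * b1 * a * b4 * b5 + b3 * b1 * b0 * b2 * a * b4 * b5 - b3 * b1 * b2 * b0 * a * b4 * b5 - b3 * b2 * b0 * b1 * a * b4 * b5 + b3 * b2 * b1 * b0 * a * b4 * b5 - a * b0 * b1 * b2 * b3 * b5 * b4 + a * b0 * b2 * b1 * b3 * b5 * b4 + a * b1 * b0 * b2 * b3 * b5 * b4 - a * b1 * b2 * b0 * b3 * b5 * b4 - a * b2 * b0 * b1 * b3 * b5 * b4 + a * b2 * b1 * b0 * b3 * b5 * b4 + a * b3 * b0 * b1 * b2 * b5 * b4 - a * b3 * b0 * b2 * b1 * b5 * b4 - a * b3 * b1 * b0 * b2 * b5 * b4 + a * b3 * b1 * b2 * b0 * b5 * b4 + a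 * b3 * b2 * b0 * b1 * b5 * b4 - a * b3 * b2 * b1 * b0 * b5 * b4 + b0 * b1 * b2 * a * b3 * b5 * b4 - b0 * b2 * b1 * a * b3 * b5 * b4 - b1 * b0 * b2 * a * b3 * b5 * b4 + b1 * b2 * b0 * a * b3 * b5 * b4 + b2 * b0 * b1 * a * b3 * b5 * b4 - b2 * b1 * b0 * a * b3 * b5 * b4 - b0 * b1 * b2 * b3 * a * b5 * b4 + b0 * b2 * b1 * b3 * a * b5 * b4 + b1 * b0 * b2 * b3 * a * b5 * b4 - b1 * b2 * b0 * b3 * a * b5 * b4 - b2 * b0 * b1 * b3 * a * b5 * b4 + b2 * b1 * b0 * b3 * a * b5 * b4 - b3 * a * b0 * b1 * b2 * b5 * b4 + b3 * a * b0 * b2 * b1 * b5 * b4 + b3 * a * b1 * b0 * b2 * b5 * b4 - b3 * a * b1 * b2 * b0 * b5 * b4 - b3 * a * b2 * b0 * b1 * b5 * b4 + b3 * a * b2 * b1 * b0 * b5 * b4 + b3 * b0 * b1 * b2 * a * b5 * b4 - b3 * b0 * b2 * b1 * a * b5 * b4 - b3 * b1 * b0 * b2 * a * b5 * b4 + b3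 * b1 * b2 * b0 * a * b5 * b4 + b3 * b2 * b0 * b1 * a * b5 * b4 - b3 * b2 * b1 * b0 * a * b5 * b4 - b4 * a * b0 * b1 * b2 * b3 * b5 + b4 * a * b0 * b2 * b1 * b3 * b5 + b4 * a * b1 * b0 * b2 * b3 * b5 - b4 * a * b1 * b2 * b0 * b3 * b5 - b4 * a * b2 * b0 * b1 * b3 * b5 + b4 * a * b2 * b1 * b0 * b3 * b5 + b4 * a * b3 * b0 * b1 * b2 * b5 - b4 * a * b3 * b0 * b2 * b1 * b5 - b4 * a * b3 * b1 * b0 * b2 * b5 + b4 * a * b3 * b1 * b2 * b0 * b5 + b4 * a * b3 * b2 * b0 * b1 * b5 - b4 * a * b3 * b2 * b1 * b0 * b5 + b4 * b0 * b1 * b2 * a * b3 * b5 - b4 * b0 * b2 * b1 * a * b3 * b5 - b4 * b1 * b0 * b2 * a * b3 * b5 + b4 * b1 * b2 * b0 * a * b3 * b5 + b4 * b2 * b0 * b1 * a * b3 * b5 - b4 * b2 * b1 * b0 * a * b3 * b5 - b4 * b0 * b1 * b2 * b3 * a * b5 + b4 * b0 * b2 * b1 * b3 * a * b5 + b4 *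 b1 * b0 * b2 * b3 * a * b5 - b4 * b1 * b2 * b0 * b3 * a * b5 - b4 * b2 * b0 * b1 * b3 * a * b5 + b4 * b2 * b1 * b0 * b3 * a * b5 - b4 * b3 * a * b0 * b1 * b2 * b5 + b4 * b3 * a * b0 * b2 * b1 * b5 + b4 * b3 * a * b1 * b0 * b2 * b5 - b4 * b3 * a * b1 * b2 * b0 * b5 - b4 * b3 * a * b2 * b0 * b1 * b5 + b4 * b3 * a * b2 * b1 * b0 * b5 + b4 * b3 * b0 * b1 * b2 * a * b5 - b4 * b3 * b0 * b2 * b1 * a * b5 - b4 * b3 * b1 * b0 * b2 * a * b5 + b4 * b3 * b1 * b2 * b0 * a * b5 + b4 * b3 * b2 * b0 * b1 * a * b5 - b4 * b3 * b2 * b1 * b0 * a * b5 + b4 * b5 * a * b0 * b1 * b2 * b3 - b4 * b5 * a * b0 * b2 * b1 * b3 - b4 * b5 * a * b1 * b0 * b2 * b3 + b4 * b5 * a * b1 * b2 * b0 * b3 + b4 * b5 * a * b2 * b0 * b1 * b3 - b4 * b5 * a * b2 * b1 * b0 * b3 - b4 * b5 * a * b3 * b0 * b1 * b2 + b4 * b5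 * a * b3 * b0 * b2 * b1 + b4 * b5 * a * b3 * b1 * b0 * b2 - b4 * b5 * a * b3 * b1 * b2 * b0 - b4 * b5 * a * b3 * b2 * b0 * b1 + b4 * b5 * a * b3 * b2 * b1 * b0 - b4 * b5 * b0 * b1 * b2 * a * b3 + b4 * b5 * b0 * b2 * b1 * a * b3 + b4 * b5 * b1 * b0 * b2 * a * b3 - b4 * b5 * b1 * b2 * b0 * a * b3 - b4 * b5 * b2 * b0 * b1 * a * b3 + b4 * b5 * b2 * b1 * b0 * a * b3 + b4 * b5 * b0 * b1 * b2 * b3 * a - b4 * b5 * b0 * b2 * b1 * b3 * a - b4 * b5 * b1 * b0 * b2 * b3 * a + b4 * b5 * b1 * b2 * b0 * b3 * a + b4 * b5 * b2 * b0 * b1 * b3 * a - b4 * b5 * b2 * b1 * b0 * b3 * a + b4 * b5 * b3 * a * b0 * b1 * b2 - b4 * b5 * b3 * a * b0 * b2 * b1 - b4 * b5 * b3 * a * b1 * b0 * b2 + b4 * b5 * b3 * a * b1 * b2 * b0 + b4 * b5 * b3 * a * b2 * b0 * b1 - b4 * b5 * b3 * a * b2 * b1 * b0 - b4 * b5 *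 b3 * b0 * b1 * b2 * a + b4 * b5 * b3 * b0 * b2 * b1 * a + b4 * b5 * b3 * b1 * b0 * b2 * a - b4 * b5 * b3 * b1 * b2 * b0 * a - b4 * b5 * b3 * b2 * b0 * b1 * a + b4 * b5 * b3 * b2 * b1 * b0 * a + b5 * a * b0 * b1 * b2 * b3 * b4 - b5 * a * b0 * b2 * b1 * b3 * b4 - b5 * a * b1 * b0 * b2 * b3 * b4 + b5 * a * b1 * b2 * b0 * b3 * b4 + b5 * a * b2 * b0 * b1 * b3 * b4 - b5 * a * b2 * b1 * b0 * b3 * b4 - b5 * a * b3 * b0 * b1 * b2 * b4 + b5 * a * b3 * b0 * b2 * b1 * b4 + b5 * a * b3 * b1 * b0 * b2 * b4 - b5 * a * b3 * b1 * b2 * b0 * b4 - b5 * a * b3 * b2 * b0 * b1 * b4 + b5 * a * b3 * b2 * b1 * b0 * b4 - b5 * b0 * b1 * b2 * a * b3 * b4 + b5 * b0 * b2 * b1 * a * b3 * b4 + b5 * b1 * b0 * b2 * a * b3 * b4 - b5 * b1 * b2 * b0 * a * b3 * b4 - b5 * b2 * b0 * b1 * a * b3 * b4 + b5 * b2 * b1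 * b0 * a * b3 * b4 + b5 * b0 * b1 * b2 * b3 * a * b4 - b5 * b0 * b2 * b1 * b3 * a * b4 - b5 * b1 * b0 * b2 * b3 * a * b4 + b5 * b1 * b2 * b0 * b3 * a * b4 + b5 * b2 * b0 * b1 * b3 * a * b4 - b5 * b2 * b1 * b0 * b3 * a * b4 + b5 * b3 * a * b0 * b1 * b2 * b4 - b5 * b3 * a * b0 * b2 * b1 * b4 - b5 * b3 * a * b1 * b0 * b2 * b4 + b5 * b3 * a * b1 * b2 * b0 * b4 + b5 * b3 * a * b2 * b0 * b1 * b4 - b5 * b3 * a * b2 * b1 * b0 * b4 - b5 * b3 * b0 * b1 * b2 * a * b4 + b5 * b3 * b0 * b2 * b1 * a * b4 + b5 * b3 * b1 * b0 * b2 * a * b4 - b5 * b3 * b1 * b2 * b0 * a * b4 - b5 * b3 * b2 * b0 * b1 * a * b4 + b5 * b3 * b2 * b1 * b0 * a * b4 - b5 * b4 * a * b0 * b1 * b2 * b3 + b5 * b4 * a * b0 * b2 * b1 * b3 + b5 * b4 * a * b1 * b0 * b2 * b3 - b5 * b4 * a * b1 * b2 * b0 * b3 - b5 * b4 * a * b2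 * b0 * b1 * b3 + b5 * b4 * a * b2 * b1 * b0 * b3 + b5 * b4 * a * b3 * b0 * b1 * b2 - b5 * b4 * a * b3 * b0 * b2 * b1 - b5 * b4 * a * b3 * b1 * b0 * b2 + b5 * b4 * a * b3 * b1 * b2 * b0 + b5 * b4 * a * b3 * b2 * b0 * b1 - b5 * b4 * a * b3 * b2 * b1 * b0 + b5 * b4 * b0 * b1 * b2 * a * b3 - b5 * b4 * b0 * b2 * b1 * a * b3 - b5 * b4 * b1 * b0 * b2 * a * b3 + b5 * b4 * b1 * b2 * b0 * a * b3 + b5 * b4 * b2 * b0 * b1 * a * b3 - b5 * b4 * b2 * b1 * b0 * a * b3 - b5 * b4 * b0 * b1 * b2 * b3 * a + b5 * b4 * b0 * b2 * b1 * b3 * a + b5 * b4 * b1 * b0 * b2 * b3 * a - b5 * b4 * b1 * b2 * b0 * b3 * a - b5 * b4 * b2 * b0 * b1 * b3 * a + b5 * b4 * b2 * b1 * b0 * b3 * a - b5 * b4 * b3 * a * b0 * b1 * b2 + b5 * b4 * b3 * a * b0 * b2 * b1 + b5 * b4 * b3 * a * b1 * b0 * b2 - b5 * b4 * b3 * a *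 b1 * b2 * b0 - b5 * b4 * b3 * a * b2 * b0 * b1 + b5 * b4 * b3 * a * b2 * b1 * b0 + b5 * b4 * b3 * b0 * b1 * b2 * a - b5 * b4 * b3 * b0 * b2 * b1 * a - b5 * b4 * b3 * b1 * b0 * b2 * a + b5 * b4 * b3 * b1 * b2 * b0 * a + b5 * b4 * b3 * b2 * b0 * b1 * a - b5 * b4 * b3 * b2 * b1 * b0 * a := by
  simp only [nambu3]
  noncomm_ring

set_option maxHeartbeats 4000000 in
private lemma expandR {R : Type*} [Ring R] (a b0 b1 b2 b3 b4 b5 : R) :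
    nambu ![nambu ![a, b0, b1], nambu ![b2, b3, b4], b5] =
      a * b0 * b1 * b2 * b3 * b4 * b5 - a * b0 * b1 * b2 * b4 * b3 * b5 - a * b0 * b1 * b3 * b2 * b4 * b5 + a * b0 * b1 * b3 * b4 * b2 * b5 + a * b0 * b1 * b4 * b2 * b3 * b5 - a * b0 * b1 * b4 * b3 * b2 * b5 - a * b1 * b0 * b2 * b3 * b4 * b5 + a * b1 * b0 * b2 * b4 * b3 * b5 + a * b1 * b0 * b3 * b2 * b4 * b5 - a * b1 * b0 * b3 * b4 * b2 * b5 - a * b1 * b0 * b4 * b2 * b3 * b5 + a * b1 * b0 * b4 * b3 * b2 * b5 - b0 * a * b1 * b2 * b3 * b4 * b5 + b0 * a * b1 * b2 * b4 * b3 * b5 + b0 * a * b1 * b3 * b2 * b4 * b5 - b0 * a * b1 * b3 * b4 * b2 * b5 - b0 * a * b1 * b4 * b2 * b3 * b5 + b0 * a * b1 * b4 * b3 * b2 * b5 + b0 * b1 * a * b2 * b3 * b4 * b5 - b0 * b1 * a * b2 * b4 * b3 * b5 - b0 * b1 * a * b3 * b2 * b4 * b5 + b0 * b1 * a * b3 *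 b4 * b2 * b5 + b0 * b1 * a * b4 * b2 * b3 * b5 - b0 * b1 * a * b4 * b3 * b2 * b5 + b1 * a * b0 * b2 * b3 * b4 * b5 - b1 * a * b0 * b2 * b4 * b3 * b5 - b1 * a * b0 * b3 * b2 * b4 * b5 + b1 * a * b0 * b3 * b4 * b2 * b5 + b1 * a * b0 * b4 * b2 * b3 * b5 - b1 * a * b0 * b4 * b3 * b2 * b5 - b1 * b0 * a * b2 * b3 * b4 * b5 + b1 * b0 * a * b2 * b4 * b3 * b5 + b1 * b0 * a * b3 * b2 * b4 * b5 - b1 * b0 * a * b3 * b4 * b2 * b5 - b1 * b0 * a * b4 * b2 * b3 * b5 + b1 * b0 * a * b4 * b3 * b2 * b5 - a * b0 * b1 * b5 * b2 * b3 * b4 + a * b0 * b1 * b5 * b2 * b4 * b3 + a * b0 * b1 * b5 * b3 * b2 * b4 - a * b0 * b1 * b5 * b3 * b4 * b2 - a * b0 * b1 * b5 * b4 * b2 * b3 + a * b0 * b1 * b5 * b4 * b3 * b2 + a * b1 * b0 * b5 * b2 * b3 * b4 - a * b1 * b0 * b5 * b2 * b4 * b3 - a * b1 * b0 * b5 * b3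 * b2 * b4 + a * b1 * b0 * b5 * b3 * b4 * b2 + a * b1 * b0 * b5 * b4 * b2 * b3 - a * b1 * b0 * b5 * b4 * b3 * b2 + b0 * a * b1 * b5 * b2 * b3 * b4 - b0 * a * b1 * b5 * b2 * b4 * b3 - b0 * a * b1 * b5 * b3 * b2 * b4 + b0 * a * b1 * b5 * b3 * b4 * b2 + b0 * a * b1 * b5 * b4 * b2 * b3 - b0 * a * b1 * b5 * b4 * b3 * b2 - b0 * b1 * a * b5 * b2 * b3 * b4 + b0 * b1 * a * b5 * b2 * b4 * b3 + b0 * b1 * a * b5 * b3 * b2 * b4 - b0 * b1 * a * b5 * b3 * b4 * b2 - b0 * b1 * a * b5 * b4 * b2 * b3 + b0 * b1 * a * b5 * b4 * b3 * b2 - b1 * a * b0 * b5 * b2 * b3 * b4 + b1 * a * b0 * b5 * b2 * b4 * b3 + b1 * a * b0 * b5 * b3 * b2 * b4 - b1 * a * b0 * b5 * b3 * b4 * b2 - b1 * a * b0 * b5 * b4 * b2 * b3 + b1 * a * b0 * b5 * b4 * b3 * b2 + b1 * b0 * a * b5 * b2 * b3 * b4 - b1 * b0 * a * b5 * b2 *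 b4 * b3 - b1 * b0 * a * b5 * b3 * b2 * b4 + b1 * b0 * a * b5 * b3 * b4 * b2 + b1 * b0 * a * b5 * b4 * b2 * b3 - b1 * b0 * a * b5 * b4 * b3 * b2 - b2 * b3 * b4 * a * b0 * b1 * b5 + b2 * b3 * b4 * a * b1 * b0 * b5 + b2 * b3 * b4 * b0 * a * b1 * b5 - b2 * b3 * b4 * b0 * b1 * a * b5 - b2 * b3 * b4 * b1 * a * b0 * b5 + b2 * b3 * b4 * b1 * b0 * a * b5 + b2 * b4 * b3 * a * b0 * b1 * b5 - b2 * b4 * b3 * a * b1 * b0 * b5 - b2 * b4 * b3 * b0 * a * b1 * b5 + b2 * b4 * b3 * b0 * b1 * a * b5 + b2 * b4 * b3 * b1 * a * b0 * b5 - b2 * b4 * b3 * b1 * b0 * a * b5 + b3 * b2 * b4 * a * b0 * b1 * b5 - b3 * b2 * b4 * a * b1 * b0 * b5 - b3 * b2 * b4 * b0 * a * b1 * b5 + b3 * b2 * b4 * b0 * b1 * a * b5 + b3 * b2 * b4 * b1 * a * b0 * b5 - b3 * b2 * b4 * b1 * b0 * a * b5 - b3 * b4 * b2 * a * b0 * b1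 * b5 + b3 * b4 * b2 * a * b1 * b0 * b5 + b3 * b4 * b2 * b0 * a * b1 * b5 - b3 * b4 * b2 * b0 * b1 * a * b5 - b3 * b4 * b2 * b1 * a * b0 * b5 + b3 * b4 * b2 * b1 * b0 * a * b5 - b4 * b2 * b3 * a * b0 * b1 * b5 + b4 * b2 * b3 * a * b1 * b0 * b5 + b4 * b2 * b3 * b0 * a * b1 * b5 - b4 * b2 * b3 * b0 * b1 * a * b5 - b4 * b2 * b3 * b1 * a * b0 * b5 + b4 * b2 * b3 * b1 * b0 * a * b5 + b4 * b3 * b2 * a * b0 * b1 * b5 - b4 * b3 * b2 * a * b1 * b0 * b5 - b4 * b3 * b2 * b0 * a * b1 * b5 + b4 * b3 * b2 * b0 * b1 * a * b5 + b4 * b3 * b2 * b1 * a * b0 * b5 - b4 * b3 * b2 * b1 * b0 * a * b5 + b2 * b3 * b4 * b5 * a * b0 * b1 - b2 * b3 * b4 * b5 * a * b1 * b0 - b2 * b3 * b4 * b5 * b0 * a * b1 + b2 * b3 * b4 * b5 * b0 * b1 * a + b2 * b3 * b4 * b5 * b1 * a * b0 - b2 * b3 * b4 * b5 * b1 * b0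 * a - b2 * b4 * b3 * b5 * a * b0 * b1 + b2 * b4 * b3 * b5 * a * b1 * b0 + b2 * b4 * b3 * b5 * b0 * a * b1 - b2 * b4 * b3 * b5 * b0 * b1 * a - b2 * b4 * b3 * b5 * b1 * a * b0 + b2 * b4 * b3 * b5 * b1 * b0 * a - b3 * b2 * b4 * b5 * a * b0 * b1 + b3 * b2 * b4 * b5 * a * b1 * b0 + b3 * b2 * b4 * b5 * b0 * a * b1 - b3 * b2 * b4 * b5 * b0 * b1 * a - b3 * b2 * b4 * b5 * b1 * a * b0 + b3 * b2 * b4 * b5 * b1 * b0 * a + b3 * b4 * b2 * b5 * a * b0 * b1 - b3 * b4 * b2 * b5 * a * b1 * b0 - b3 * b4 * b2 * b5 * b0 * a * b1 + b3 * b4 * b2 * b5 * b0 * b1 * a + b3 * b4 * b2 * b5 * b1 * a * b0 - b3 * b4 * b2 * b5 * b1 * b0 * a + b4 * b2 * b3 * b5 * a * b0 * b1 - b4 * b2 * b3 * b5 * a * b1 * b0 - b4 * b2 * b3 * b5 * b0 * a * b1 + b4 * b2 * b3 * b5 * b0 * b1 * a + b4 * b2 * b3 * b5 * b1 * a * b0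 - b4 * b2 * b3 * b5 * b1 * b0 * a - b4 * b3 * b2 * b5 * a * b0 * b1 + b4 * b3 * b2 * b5 * a * b1 * b0 + b4 * b3 * b2 * b5 * b0 * a * b1 - b4 * b3 * b2 * b5 * b0 * b1 * a - b4 * b3 * b2 * b5 * b1 * a * b0 + b4 * b3 * b2 * b5 * b1 * b0 * a + b5 * a * b0 * b1 * b2 * b3 * b4 - b5 * a * b0 * b1 * b2 * b4 * b3 - b5 * a * b0 * b1 * b3 * b2 * b4 + b5 * a * b0 * b1 * b3 * b4 * b2 + b5 * a * b0 * b1 * b4 * b2 * b3 - b5 * a * b0 * b1 * b4 * b3 * b2 - b5 * a * b1 * b0 * b2 * b3 * b4 + b5 * a * b1 * b0 * b2 * b4 * b3 + b5 * a * b1 * b0 * b3 * b2 * b4 - b5 * a * b1 * b0 * b3 * b4 * b2 - b5 * a * b1 * b0 * b4 * b2 * b3 + b5 * a * b1 * b0 * b4 * b3 * b2 - b5 * b0 * a * b1 * b2 * b3 * b4 + b5 * b0 * a * b1 * b2 * b4 * b3 + b5 * b0 * a * b1 * b3 * b2 * b4 - b5 * b0 * a * b1 * b3 * b4 * b2 -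 b5 * b0 * a * b1 * b4 * b2 * b3 + b5 * b0 * a * b1 * b4 * b3 * b2 + b5 * b0 * b1 * a * b2 * b3 * b4 - b5 * b0 * b1 * a * b2 * b4 * b3 - b5 * b0 * b1 * a * b3 * b2 * b4 + b5 * b0 * b1 * a * b3 * b4 * b2 + b5 * b0 * b1 * a * b4 * b2 * b3 - b5 * b0 * b1 * a * b4 * b3 * b2 + b5 * b1 * a * b0 * b2 * b3 * b4 - b5 * b1 * a * b0 * b2 * b4 * b3 - b5 * b1 * a * b0 * b3 * b2 * b4 + b5 * b1 * a * b0 * b3 * b4 * b2 + b5 * b1 * a * b0 * b4 * b2 * b3 - b5 * b1 * a * b0 * b4 * b3 * b2 - b5 * b1 * b0 * a * b2 * b3 * b4 + b5 * b1 * b0 * a * b2 * b4 * b3 + b5 * b1 * b0 * a * b3 * b2 * b4 - b5 * b1 * b0 * a * b3 * b4 * b2 - b5 * b1 * b0 * a * b4 * b2 * b3 + b5 * b1 * b0 * a * b4 * b3 * b2 - b5 * b2 * b3 * b4 * a * b0 * b1 + b5 * b2 * b3 * b4 * a * b1 * b0 + b5 * b2 * b3 * b4 * b0 * a * b1 - b5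 * b2 * b3 * b4 * b0 * b1 * a - b5 * b2 * b3 * b4 * b1 * a * b0 + b5 * b2 * b3 * b4 * b1 * b0 * a + b5 * b2 * b4 * b3 * a * b0 * b1 - b5 * b2 * b4 * b3 * a * b1 * b0 - b5 * b2 * b4 * b3 * b0 * a * b1 + b5 * b2 * b4 * b3 * b0 * b1 * a + b5 * b2 * b4 * b3 * b1 * a * b0 - b5 * b2 * b4 * b3 * b1 * b0 * a + b5 * b3 * b2 * b4 * a * b0 * b1 - b5 * b3 * b2 * b4 * a * b1 * b0 - b5 * b3 * b2 * b4 * b0 * a * b1 + b5 * b3 * b2 * b4 * b0 * b1 * a + b5 * b3 * b2 * b4 * b1 * a * b0 - b5 * b3 * b2 * b4 * b1 * b0 * a - b5 * b3 * b4 * b2 * a * b0 * b1 + b5 * b3 * b4 * b2 * a * b1 * b0 + b5 * b3 * b4 * b2 * b0 * a * b1 - b5 * b3 * b4 * b2 * b0 * b1 * a - b5 * b3 * b4 * b2 * b1 * a * b0 + b5 * b3 * b4 * b2 * b1 * b0 * a - b5 * b4 * b2 * b3 * a * b0 * b1 + b5 * b4 * b2 * b3 * a * b1 * b0 + b5 *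 b4 * b2 * b3 * b0 * a * b1 - b5 * b4 * b2 * b3 * b0 * b1 * a - b5 * b4 * b2 * b3 * b1 * a * b0 + b5 * b4 * b2 * b3 * b1 * b0 * a + b5 * b4 * b3 * b2 * a * b0 * b1 - b5 * b4 * b3 * b2 * a * b1 * b0 - b5 * b4 * b3 * b2 * b0 * a * b1 + b5 * b4 * b3 * b2 * b0 * b1 * a + b5 * b4 * b3 * b2 * b1 * a * b0 - b5 * b4 * b3 * b2 * b1 * b0 * a := by
  simp only [nambu3]
  noncomm_ring

set_option maxHeartbeats 4000000 in
set_option maxRecDepth 100000 in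
/-- Bremner's identity: with total antisymmetrization over the six lower-case entries,
`[[A[bcd]e]fg] = [[Abc][def]g]`. -/
theorem main_theorem_L_one {R : Type*} [Ring R] (A : R) (B : Fin 6 → R) :
    ∑ τ : Equiv.Perm (Fin 6), (Equiv.Perm.sign τ : ℤ) •
        nambu ![nambu ![A, nambu ![B (τ 0), B (τ 1), B (τ 2)], B (τ 3)], B (τ 4), B (τ 5)] =
      ∑ τ : Equiv.Perm (Fin 6), (Equiv.Perm.sign τ : ℤ) •
        nambu ![nambu ![A, B (τ 0), B (τ 1)], nambu ![B (τ 2), B (τ 3), B (τ 4)], B (τ 5)] := by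
  have hexpL : ∀ τ : Equiv.Perm (Fin 6),
      nambu ![nambu ![A, nambu ![B (τ 0), B (τ 1), B (τ 2)], B (τ 3)], B (τ 4), B (τ 5)] =
      W0 A B (⇑τ ∘ ⇑sg0) - W0 A B (⇑τ ∘ ⇑sg1) - W0 A B (⇑τ ∘ ⇑sg2) + W0 A B (⇑τ ∘ ⇑sg3) + W0 A B (⇑τ ∘ ⇑sg4) - W0 A B (⇑τ ∘ ⇑sg5) - W0 A B (⇑τ ∘ ⇑sg6) + W0 A B (⇑τ ∘ ⇑sg7) + W0 A B (⇑τ ∘ ⇑sg8) - W0 A B (⇑τ ∘ ⇑sg9) - W0 A B (⇑τ ∘ ⇑sg10) + W0 A B (⇑τ ∘ ⇑sg11) - W3 A B (⇑τ ∘ ⇑sg0) + W3 A B (⇑τ ∘ ⇑sg1) + W3 A B (⇑τ ∘ ⇑sg2) - W3 A B (⇑τ ∘ ⇑sg3) - W3 A B (⇑τ ∘ ⇑sg4) + W3 A B (⇑τ ∘ ⇑sg5) + W4 A B (⇑τ ∘ ⇑sg0) - W4 A B (⇑τ ∘ ⇑sg1) - W4 A B (⇑τ ∘ ⇑sg2)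 + W4 A B (⇑τ ∘ ⇑sg3) + W4 A B (⇑τ ∘ ⇑sg4) - W4 A B (⇑τ ∘ ⇑sg5) + W1 A B (⇑τ ∘ ⇑sg6) - W1 A B (⇑τ ∘ ⇑sg7) - W1 A B (⇑τ ∘ ⇑sg8) + W1 A B (⇑τ ∘ ⇑sg9) + W1 A B (⇑τ ∘ ⇑sg10) - W1 A B (⇑τ ∘ ⇑sg11) - W4 A B (⇑τ ∘ ⇑sg6) + W4 A B (⇑τ ∘ ⇑sg7) + W4 A B (⇑τ ∘ ⇑sg8) - W4 A B (⇑τ ∘ ⇑sg9) - W4 A B (⇑τ ∘ ⇑sg10) + W4 A B (⇑τ ∘ ⇑sg11) - W0 A B (⇑τ ∘ ⇑sg12) + W0 A B (⇑τ ∘ ⇑sg13) + W0 A B (⇑τ ∘ ⇑sg14) - W0 A B (⇑τ ∘ ⇑sg15) - W0 A B (⇑τ ∘ ⇑sg16) + W0 A B (⇑τ ∘ ⇑sg17) + W0 A B (⇑τ ∘ ⇑sg18) - W0 A B (⇑τ ∘ ⇑sg19) - W0 A B (⇑τ ∘ ⇑sg20) + W0 A B (⇑τ ∘ ⇑sg21)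 + W0 A B (⇑τ ∘ ⇑sg22) - W0 A B (⇑τ ∘ ⇑sg23) + W3 A B (⇑τ ∘ ⇑sg12) - W3 A B (⇑τ ∘ ⇑sg13) - W3 A B (⇑τ ∘ ⇑sg14) + W3 A B (⇑τ ∘ ⇑sg15) + W3 A B (⇑τ ∘ ⇑sg16) - W3 A B (⇑τ ∘ ⇑sg17) - W4 A B (⇑τ ∘ ⇑sg12) + W4 A B (⇑τ ∘ ⇑sg13) + W4 A B (⇑τ ∘ ⇑sg14) - W4 A B (⇑τ ∘ ⇑sg15) - W4 A B (⇑τ ∘ ⇑sg16) + W4 A B (⇑τ ∘ ⇑sg17) - W1 A B (⇑τ ∘ ⇑sg18) + W1 A B (⇑τ ∘ ⇑sg19) + W1 A B (⇑τ ∘ ⇑sg20) - W1 A B (⇑τ ∘ ⇑sg21) - W1 A B (⇑τ ∘ ⇑sg22) + W1 A B (⇑τ ∘ ⇑sg23) + W4 A B (⇑τ ∘ ⇑sg18) - W4 A B (⇑τ ∘ ⇑sg19) - W4 A B (⇑τ ∘ ⇑sg20) + W4 A B (⇑τ ∘ ⇑sg21) + W4 A B (⇑τ ∘ ⇑sg22)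 - W4 A B (⇑τ ∘ ⇑sg23) - W1 A B (⇑τ ∘ ⇑sg24) + W1 A B (⇑τ ∘ ⇑sg25) + W1 A B (⇑τ ∘ ⇑sg26) - W1 A B (⇑τ ∘ ⇑sg27) - W1 A B (⇑τ ∘ ⇑sg28) + W1 A B (⇑τ ∘ ⇑sg29) + W1 A B (⇑τ ∘ ⇑sg30) - W1 A B (⇑τ ∘ ⇑sg31) - W1 A B (⇑τ ∘ ⇑sg32) + W1 A B (⇑τ ∘ ⇑sg33) + W1 A B (⇑τ ∘ ⇑sg34) - W1 A B (⇑τ ∘ ⇑sg35) + W4 A B (⇑τ ∘ ⇑sg24) - W4 A B (⇑τ ∘ ⇑sg25) - W4 A B (⇑τ ∘ ⇑sg26) + W4 A B (⇑τ ∘ ⇑sg27) + W4 A B (⇑τ ∘ ⇑sg28) - W4 A B (⇑τ ∘ ⇑sg29) - W5 A B (⇑τ ∘ ⇑sg24) + W5 A B (⇑τ ∘ ⇑sg25) + W5 A B (⇑τ ∘ ⇑sg26) - W5 A B (⇑τ ∘ ⇑sg27) - W5 A B (⇑τ ∘ ⇑sg28) + W5 A B (⇑τ ∘ ⇑sg29)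 - W2 A B (⇑τ ∘ ⇑sg30) + W2 A B (⇑τ ∘ ⇑sg31) + W2 A B (⇑τ ∘ ⇑sg32) - W2 A B (⇑τ ∘ ⇑sg33) - W2 A B (⇑τ ∘ ⇑sg34) + W2 A B (⇑τ ∘ ⇑sg35) + W5 A B (⇑τ ∘ ⇑sg30) - W5 A B (⇑τ ∘ ⇑sg31) - W5 A B (⇑τ ∘ ⇑sg32) + W5 A B (⇑τ ∘ ⇑sg33) + W5 A B (⇑τ ∘ ⇑sg34) - W5 A B (⇑τ ∘ ⇑sg35) + W2 A B (⇑τ ∘ ⇑sg36) - W2 A B (⇑τ ∘ ⇑sg37) - W2 A B (⇑τ ∘ ⇑sg38) + W2 A B (⇑τ ∘ ⇑sg39) + W2 A B (⇑τ ∘ ⇑sg40) - W2 A B (⇑τ ∘ ⇑sg41) - W2 A B (⇑τ ∘ ⇑sg42) + W2 A B (⇑τ ∘ ⇑sg43) + W2 A B (⇑τ ∘ ⇑sg44) - W2 A B (⇑τ ∘ ⇑sg45) - W2 A B (⇑τ ∘ ⇑sg46) + W2 A B (⇑τ ∘ ⇑sg47) - W5 A B (⇑τ ∘ ⇑sg36)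 + W5 A B (⇑τ ∘ ⇑sg37) + W5 A B (⇑τ ∘ ⇑sg38) - W5 A B (⇑τ ∘ ⇑sg39) - W5 A B (⇑τ ∘ ⇑sg40) + W5 A B (⇑τ ∘ ⇑sg41) + W6 A B (⇑τ ∘ ⇑sg36) - W6 A B (⇑τ ∘ ⇑sg37) - W6 A B (⇑τ ∘ ⇑sg38) + W6 A B (⇑τ ∘ ⇑sg39) + W6 A B (⇑τ ∘ ⇑sg40) - W6 A B (⇑τ ∘ ⇑sg41) + W3 A B (⇑τ ∘ ⇑sg42) - W3 A B (⇑τ ∘ ⇑sg43) - W3 A B (⇑τ ∘ ⇑sg44) + W3 A B (⇑τ ∘ ⇑sg45) + W3 A B (⇑τ ∘ ⇑sg46) - W3 A B (⇑τ ∘ ⇑sg47) - W6 A B (⇑τ ∘ ⇑sg42) + W6 A B (⇑τ ∘ ⇑sg43) + W6 A B (⇑τ ∘ ⇑sg44) - W6 A B (⇑τ ∘ ⇑sg45) - W6 A B (⇑τ ∘ ⇑sg46) + W6 A B (⇑τ ∘ ⇑sg47) + W1 A B (⇑τ ∘ ⇑sg48) - W1 A B (⇑τ ∘ ⇑sg49)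 - W1 A B (⇑τ ∘ ⇑sg50) + W1 A B (⇑τ ∘ ⇑sg51) + W1 A B (⇑τ ∘ ⇑sg52) - W1 A B (⇑τ ∘ ⇑sg53) - W1 A B (⇑τ ∘ ⇑sg54) + W1 A B (⇑τ ∘ ⇑sg55) + W1 A B (⇑τ ∘ ⇑sg56) - W1 A B (⇑τ ∘ ⇑sg57) - W1 A B (⇑τ ∘ ⇑sg58) + W1 A B (⇑τ ∘ ⇑sg59) - W4 A B (⇑τ ∘ ⇑sg48) + W4 A B (⇑τ ∘ ⇑sg49) + W4 A B (⇑τ ∘ ⇑sg50) - W4 A B (⇑τ ∘ ⇑sg51) - W4 A B (⇑τ ∘ ⇑sg52) + W4 A B (⇑τ ∘ ⇑sg53) + W5 A B (⇑τ ∘ ⇑sg48) - W5 A B (⇑τ ∘ ⇑sg49) - W5 A B (⇑τ ∘ ⇑sg50) + W5 A B (⇑τ ∘ ⇑sg51) + W5 A B (⇑τ ∘ ⇑sg52) - W5 A B (⇑τ ∘ ⇑sg53) + W2 A B (⇑τ ∘ ⇑sg54) - W2 A B (⇑τ ∘ ⇑sg55) - W2 A B (⇑τ ∘ ⇑sg56)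 + W2 A B (⇑τ ∘ ⇑sg57) + W2 A B (⇑τ ∘ ⇑sg58) - W2 A B (⇑τ ∘ ⇑sg59) - W5 A B (⇑τ ∘ ⇑sg54) + W5 A B (⇑τ ∘ ⇑sg55) + W5 A B (⇑τ ∘ ⇑sg56) - W5 A B (⇑τ ∘ ⇑sg57) - W5 A B (⇑τ ∘ ⇑sg58) + W5 A B (⇑τ ∘ ⇑sg59) - W2 A B (⇑τ ∘ ⇑sg60) + W2 A B (⇑τ ∘ ⇑sg61) + W2 A B (⇑τ ∘ ⇑sg62) - W2 A B (⇑τ ∘ ⇑sg63) - W2 A B (⇑τ ∘ ⇑sg64) + W2 A B (⇑τ ∘ ⇑sg65) + W2 A B (⇑τ ∘ ⇑sg66) - W2 A B (⇑τ ∘ ⇑sg67) - W2 A B (⇑τ ∘ ⇑sg68) + W2 A B (⇑τ ∘ ⇑sg69) + W2 A B (⇑τ ∘ ⇑sg70) - W2 A B (⇑τ ∘ ⇑sg71) + W5 A B (⇑τ ∘ ⇑sg60) - W5 A B (⇑τ ∘ ⇑sg61) - W5 A B (⇑τ ∘ ⇑sg62) + W5 A B (⇑τ ∘ ⇑sg63)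 + W5 A B (⇑τ ∘ ⇑sg64) - W5 A B (⇑τ ∘ ⇑sg65) - W6 A B (⇑τ ∘ ⇑sg60) + W6 A B (⇑τ ∘ ⇑sg61) + W6 A B (⇑τ ∘ ⇑sg62) - W6 A B (⇑τ ∘ ⇑sg63) - W6 A B (⇑τ ∘ ⇑sg64) + W6 A B (⇑τ ∘ ⇑sg65) - W3 A B (⇑τ ∘ ⇑sg66) + W3 A B (⇑τ ∘ ⇑sg67) + W3 A B (⇑τ ∘ ⇑sg68) - W3 A B (⇑τ ∘ ⇑sg69) - W3 A B (⇑τ ∘ ⇑sg70) + W3 A B (⇑τ ∘ ⇑sg71) + W6 A B (⇑τ ∘ ⇑sg66) - W6 A B (⇑τ ∘ ⇑sg67) - W6 A B (⇑τ ∘ ⇑sg68) + W6 A B (⇑τ ∘ ⇑sg69) + W6 A B (⇑τ ∘ ⇑sg70) - W6 A B (⇑τ ∘ ⇑sg71) := by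
    intro τ
    rw [expandL A (B (τ 0)) (B (τ 1)) (B (τ 2)) (B (τ 3)) (B (τ 4)) (B (τ 5))]
    simp only [W0, W1, W2, W3, W4, W5, W6, Function.comp_apply, sg0_a0, sg0_a1, sg0_a2, sg0_a3, sg0_a4, sg0_a5, sg10_a0, sg10_a1, sg10_a2, sg10_a3, sg10_a4, sg10_a5, sg11_a0, sg11_a1, sg11_a2, sg11_a3, sg11_a4, sg11_a5, sg12_a0, sg12_a1, sg12_a2, sg12_a3, sg12_a4, sg12_a5, sg13_a0, sg13_a1, sg13_a2, sg13_a3, sg13_a4, sg13_a5, sg14_a0, sg14_a1, sg14_a2, sg14_a3, sg14_a4, sg14_a5, sg15_a0, sg15_a1, sg15_a2, sg15_a3, sg15_a4, sg15_a5, sg16_a0, sg16_a1, sg16_a2, sg16_a3, sg16_a4, sg16_a5, sg17_a0, sg17_a1, sg17_a2, sg17_a3, sg17_a4, sg17_a5, sg18_a0, sg18_a1, sg18_a2, sg18_a3, sg18_a4, sg18_a5, sg19_a0, sg19_a1, sg19_a2, sg19_a3, sg19_a4, sg19_a5, sg1_a0, sg1_a1, sg1_a2, sg1_a3, sg1_a4,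 sg1_a5, sg20_a0, sg20_a1, sg20_a2, sg20_a3, sg20_a4, sg20_a5, sg21_a0, sg21_a1, sg21_a2, sg21_a3, sg21_a4, sg21_a5, sg22_a0, sg22_a1, sg22_a2, sg22_a3, sg22_a4, sg22_a5, sg23_a0, sg23_a1, sg23_a2, sg23_a3, sg23_a4, sg23_a5, sg24_a0, sg24_a1, sg24_a2, sg24_a3, sg24_a4, sg24_a5, sg25_a0, sg25_a1, sg25_a2, sg25_a3, sg25_a4, sg25_a5, sg26_a0, sg26_a1, sg26_a2, sg26_a3, sg26_a4, sg26_a5, sg27_a0, sg27_a1, sg27_a2, sg27_a3, sg27_a4, sg27_a5, sg28_a0, sg28_a1, sg28_a2, sg28_a3, sg28_a4, sg28_a5, sg29_a0, sg29_a1, sg29_a2, sg29_a3, sg29_a4, sg29_a5, sg2_a0, sg2_a1, sg2_a2, sg2_a3, sg2_a4, sg2_a5, sg30_a0, sg30_a1, sg30_a2, sg30_a3, sg30_a4, sg30_a5, sg31_a0, sg31_a1, sg31_a2, sg31_a3, sg31_a4, sg31_a5, sg32_a0, sg32_a1, sg32_a2, sg32_a3, sg32_a4, sg32_a5, sg33_a0,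 sg33_a1, sg33_a2, sg33_a3, sg33_a4, sg33_a5, sg34_a0, sg34_a1, sg34_a2, sg34_a3, sg34_a4, sg34_a5, sg35_a0, sg35_a1, sg35_a2, sg35_a3, sg35_a4, sg35_a5, sg36_a0, sg36_a1, sg36_a2, sg36_a3, sg36_a4, sg36_a5, sg37_a0, sg37_a1, sg37_a2, sg37_a3, sg37_a4, sg37_a5, sg38_a0, sg38_a1, sg38_a2, sg38_a3, sg38_a4, sg38_a5, sg39_a0, sg39_a1, sg39_a2, sg39_a3, sg39_a4, sg39_a5, sg3_a0, sg3_a1, sg3_a2, sg3_a3, sg3_a4, sg3_a5, sg40_a0, sg40_a1, sg40_a2, sg40_a3, sg40_a4, sg40_a5, sg41_a0, sg41_a1, sg41_a2, sg41_a3, sg41_a4, sg41_a5, sg42_a0, sg42_a1, sg42_a2, sg42_a3, sg42_a4, sg42_a5, sg43_a0, sg43_a1, sg43_a2, sg43_a3, sg43_a4, sg43_a5, sg44_a0, sg44_a1, sg44_a2, sg44_a3, sg44_a4, sg44_a5, sg45_a0, sg45_a1, sg45_a2, sg45_a3, sg45_a4, sg45_a5, sg46_a0, sg46_a1, sg46_a2,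 sg46_a3, sg46_a4, sg46_a5, sg47_a0, sg47_a1, sg47_a2, sg47_a3, sg47_a4, sg47_a5, sg48_a0, sg48_a1, sg48_a2, sg48_a3, sg48_a4, sg48_a5, sg49_a0, sg49_a1, sg49_a2, sg49_a3, sg49_a4, sg49_a5, sg4_a0, sg4_a1, sg4_a2, sg4_a3, sg4_a4, sg4_a5, sg50_a0, sg50_a1, sg50_a2, sg50_a3, sg50_a4, sg50_a5, sg51_a0, sg51_a1, sg51_a2, sg51_a3, sg51_a4, sg51_a5, sg52_a0, sg52_a1, sg52_a2, sg52_a3, sg52_a4, sg52_a5, sg53_a0, sg53_a1, sg53_a2, sg53_a3, sg53_a4, sg53_a5, sg54_a0, sg54_a1, sg54_a2, sg54_a3, sg54_a4, sg54_a5, sg55_a0, sg55_a1, sg55_a2, sg55_a3, sg55_a4, sg55_a5, sg56_a0, sg56_a1, sg56_a2, sg56_a3, sg56_a4, sg56_a5, sg57_a0, sg57_a1, sg57_a2, sg57_a3, sg57_a4, sg57_a5, sg58_a0, sg58_a1, sg58_a2, sg58_a3, sg58_a4, sg58_a5, sg59_a0, sg59_a1, sg59_a2, sg59_a3, sg59_a4,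 sg59_a5, sg5_a0, sg5_a1, sg5_a2, sg5_a3, sg5_a4, sg5_a5, sg60_a0, sg60_a1, sg60_a2, sg60_a3, sg60_a4, sg60_a5, sg61_a0, sg61_a1, sg61_a2, sg61_a3, sg61_a4, sg61_a5, sg62_a0, sg62_a1, sg62_a2, sg62_a3, sg62_a4, sg62_a5, sg63_a0, sg63_a1, sg63_a2, sg63_a3, sg63_a4, sg63_a5, sg64_a0, sg64_a1, sg64_a2, sg64_a3, sg64_a4, sg64_a5, sg65_a0, sg65_a1, sg65_a2, sg65_a3, sg65_a4, sg65_a5, sg66_a0, sg66_a1, sg66_a2, sg66_a3, sg66_a4, sg66_a5, sg67_a0, sg67_a1, sg67_a2, sg67_a3, sg67_a4, sg67_a5, sg68_a0, sg68_a1, sg68_a2, sg68_a3, sg68_a4, sg68_a5, sg69_a0, sg69_a1, sg69_a2, sg69_a3, sg69_a4, sg69_a5, sg6_a0, sg6_a1, sg6_a2, sg6_a3, sg6_a4, sg6_a5, sg70_a0, sg70_a1, sg70_a2, sg70_a3, sg70_a4, sg70_a5, sg71_a0, sg71_a1, sg71_a2, sg71_a3, sg71_a4, sg71_a5, sg7_a0,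 sg7_a1, sg7_a2, sg7_a3, sg7_a4, sg7_a5, sg8_a0, sg8_a1, sg8_a2, sg8_a3, sg8_a4, sg8_a5, sg9_a0, sg9_a1, sg9_a2, sg9_a3, sg9_a4, sg9_a5]
  have hexpR : ∀ τ : Equiv.Perm (Fin 6),
      nambu ![nambu ![A, B (τ 0), B (τ 1)], nambu ![B (τ 2), B (τ 3), B (τ 4)], B (τ 5)] =
      W0 A B (⇑τ ∘ ⇑sg0) - W0 A B (⇑τ ∘ ⇑sg72) - W0 A B (⇑τ ∘ ⇑sg73) + W0 A B (⇑τ ∘ ⇑sg74) + W0 A B (⇑τ ∘ ⇑sg75) - W0 A B (⇑τ ∘ ⇑sg76) - W0 A B (⇑τ ∘ ⇑sg2) + W0 A B (⇑τ ∘ ⇑sg77) + W0 A B (⇑τ ∘ ⇑sg78) - W0 A B (⇑τ ∘ ⇑sg79) - W0 A B (⇑τ ∘ ⇑sg80) + W0 A B (⇑τ ∘ ⇑sg81) - W1 A B (⇑τ ∘ ⇑sg0) + W1 A B (⇑τ ∘ ⇑sg72) + W1 A B (⇑τ ∘ ⇑sg73) - W1 A B (⇑τ ∘ ⇑sg74)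 - W1 A B (⇑τ ∘ ⇑sg75) + W1 A B (⇑τ ∘ ⇑sg76) + W2 A B (⇑τ ∘ ⇑sg0) - W2 A B (⇑τ ∘ ⇑sg72) - W2 A B (⇑τ ∘ ⇑sg73) + W2 A B (⇑τ ∘ ⇑sg74) + W2 A B (⇑τ ∘ ⇑sg75) - W2 A B (⇑τ ∘ ⇑sg76) + W1 A B (⇑τ ∘ ⇑sg2) - W1 A B (⇑τ ∘ ⇑sg77) - W1 A B (⇑τ ∘ ⇑sg78) + W1 A B (⇑τ ∘ ⇑sg79) + W1 A B (⇑τ ∘ ⇑sg80) - W1 A B (⇑τ ∘ ⇑sg81) - W2 A B (⇑τ ∘ ⇑sg2) + W2 A B (⇑τ ∘ ⇑sg77) + W2 A B (⇑τ ∘ ⇑sg78) - W2 A B (⇑τ ∘ ⇑sg79) - W2 A B (⇑τ ∘ ⇑sg80) + W2 A B (⇑τ ∘ ⇑sg81) - W0 A B (⇑τ ∘ ⇑sg82) + W0 A B (⇑τ ∘ ⇑sg83) + W0 A B (⇑τ ∘ ⇑sg84) - W0 A B (⇑τ ∘ ⇑sg85) - W0 A B (⇑τ ∘ ⇑sg86)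 + W0 A B (⇑τ ∘ ⇑sg87) + W0 A B (⇑τ ∘ ⇑sg88) - W0 A B (⇑τ ∘ ⇑sg89) - W0 A B (⇑τ ∘ ⇑sg90) + W0 A B (⇑τ ∘ ⇑sg91) + W0 A B (⇑τ ∘ ⇑sg92) - W0 A B (⇑τ ∘ ⇑sg93) + W1 A B (⇑τ ∘ ⇑sg82) - W1 A B (⇑τ ∘ ⇑sg83) - W1 A B (⇑τ ∘ ⇑sg84) + W1 A B (⇑τ ∘ ⇑sg85) + W1 A B (⇑τ ∘ ⇑sg86) - W1 A B (⇑τ ∘ ⇑sg87) - W2 A B (⇑τ ∘ ⇑sg82) + W2 A B (⇑τ ∘ ⇑sg83) + W2 A B (⇑τ ∘ ⇑sg84) - W2 A B (⇑τ ∘ ⇑sg85) - W2 A B (⇑τ ∘ ⇑sg86) + W2 A B (⇑τ ∘ ⇑sg87) - W1 A B (⇑τ ∘ ⇑sg88) + W1 A B (⇑τ ∘ ⇑sg89) + W1 A B (⇑τ ∘ ⇑sg90) - W1 A B (⇑τ ∘ ⇑sg91) - W1 A B (⇑τ ∘ ⇑sg92) + W1 A B (⇑τ ∘ ⇑sg93)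 + W2 A B (⇑τ ∘ ⇑sg88) - W2 A B (⇑τ ∘ ⇑sg89) - W2 A B (⇑τ ∘ ⇑sg90) + W2 A B (⇑τ ∘ ⇑sg91) + W2 A B (⇑τ ∘ ⇑sg92) - W2 A B (⇑τ ∘ ⇑sg93) - W3 A B (⇑τ ∘ ⇑sg94) + W3 A B (⇑τ ∘ ⇑sg95) + W4 A B (⇑τ ∘ ⇑sg94) - W5 A B (⇑τ ∘ ⇑sg94) - W4 A B (⇑τ ∘ ⇑sg95) + W5 A B (⇑τ ∘ ⇑sg95) + W3 A B (⇑τ ∘ ⇑sg96) - W3 A B (⇑τ ∘ ⇑sg97) - W4 A B (⇑τ ∘ ⇑sg96) + W5 A B (⇑τ ∘ ⇑sg96) + W4 A B (⇑τ ∘ ⇑sg97) - W5 A B (⇑τ ∘ ⇑sg97) + W3 A B (⇑τ ∘ ⇑sg98) - W3 A B (⇑τ ∘ ⇑sg99) - W4 A B (⇑τ ∘ ⇑sg98) + W5 A B (⇑τ ∘ ⇑sg98) + W4 A B (⇑τ ∘ ⇑sg99) - W5 A B (⇑τ ∘ ⇑sg99) - W3 A B (⇑τ ∘ ⇑sg100)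 + W3 A B (⇑τ ∘ ⇑sg101) + W4 A B (⇑τ ∘ ⇑sg100) - W5 A B (⇑τ ∘ ⇑sg100) - W4 A B (⇑τ ∘ ⇑sg101) + W5 A B (⇑τ ∘ ⇑sg101) - W3 A B (⇑τ ∘ ⇑sg102) + W3 A B (⇑τ ∘ ⇑sg103) + W4 A B (⇑τ ∘ ⇑sg102) - W5 A B (⇑τ ∘ ⇑sg102) - W4 A B (⇑τ ∘ ⇑sg103) + W5 A B (⇑τ ∘ ⇑sg103) + W3 A B (⇑τ ∘ ⇑sg34) - W3 A B (⇑τ ∘ ⇑sg35) - W4 A B (⇑τ ∘ ⇑sg34) + W5 A B (⇑τ ∘ ⇑sg34) + W4 A B (⇑τ ∘ ⇑sg35) - W5 A B (⇑τ ∘ ⇑sg35) + W4 A B (⇑τ ∘ ⇑sg104) - W4 A B (⇑τ ∘ ⇑sg105) - W5 A B (⇑τ ∘ ⇑sg104) + W6 A B (⇑τ ∘ ⇑sg104) + W5 A B (⇑τ ∘ ⇑sg105) - W6 A B (⇑τ ∘ ⇑sg105) - W4 A B (⇑τ ∘ ⇑sg106) + W4 A B (⇑τ ∘ ⇑sg107)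 + W5 A B (⇑τ ∘ ⇑sg106) - W6 A B (⇑τ ∘ ⇑sg106) - W5 A B (⇑τ ∘ ⇑sg107) + W6 A B (⇑τ ∘ ⇑sg107) - W4 A B (⇑τ ∘ ⇑sg108) + W4 A B (⇑τ ∘ ⇑sg109) + W5 A B (⇑τ ∘ ⇑sg108) - W6 A B (⇑τ ∘ ⇑sg108) - W5 A B (⇑τ ∘ ⇑sg109) + W6 A B (⇑τ ∘ ⇑sg109) + W4 A B (⇑τ ∘ ⇑sg110) - W4 A B (⇑τ ∘ ⇑sg111) - W5 A B (⇑τ ∘ ⇑sg110) + W6 A B (⇑τ ∘ ⇑sg110) + W5 A B (⇑τ ∘ ⇑sg111) - W6 A B (⇑τ ∘ ⇑sg111) + W4 A B (⇑τ ∘ ⇑sg112) - W4 A B (⇑τ ∘ ⇑sg113) - W5 A B (⇑τ ∘ ⇑sg112) + W6 A B (⇑τ ∘ ⇑sg112) + W5 A B (⇑τ ∘ ⇑sg113) - W6 A B (⇑τ ∘ ⇑sg113) - W4 A B (⇑τ ∘ ⇑sg114) + W4 A B (⇑τ ∘ ⇑sg115) + W5 A B (⇑τ ∘ ⇑sg114)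 - W6 A B (⇑τ ∘ ⇑sg114) - W5 A B (⇑τ ∘ ⇑sg115) + W6 A B (⇑τ ∘ ⇑sg115) + W1 A B (⇑τ ∘ ⇑sg48) - W1 A B (⇑τ ∘ ⇑sg116) - W1 A B (⇑τ ∘ ⇑sg117) + W1 A B (⇑τ ∘ ⇑sg118) + W1 A B (⇑τ ∘ ⇑sg119) - W1 A B (⇑τ ∘ ⇑sg120) - W1 A B (⇑τ ∘ ⇑sg50) + W1 A B (⇑τ ∘ ⇑sg121) + W1 A B (⇑τ ∘ ⇑sg122) - W1 A B (⇑τ ∘ ⇑sg123) - W1 A B (⇑τ ∘ ⇑sg124) + W1 A B (⇑τ ∘ ⇑sg125) - W2 A B (⇑τ ∘ ⇑sg48) + W2 A B (⇑τ ∘ ⇑sg116) + W2 A B (⇑τ ∘ ⇑sg117) - W2 A B (⇑τ ∘ ⇑sg118) - W2 A B (⇑τ ∘ ⇑sg119) + W2 A B (⇑τ ∘ ⇑sg120) + W3 A B (⇑τ ∘ ⇑sg48) - W3 A B (⇑τ ∘ ⇑sg116) - W3 A B (⇑τ ∘ ⇑sg117) + W3 A B (⇑τ ∘ ⇑sg118)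 + W3 A B (⇑τ ∘ ⇑sg119) - W3 A B (⇑τ ∘ ⇑sg120) + W2 A B (⇑τ ∘ ⇑sg50) - W2 A B (⇑τ ∘ ⇑sg121) - W2 A B (⇑τ ∘ ⇑sg122) + W2 A B (⇑τ ∘ ⇑sg123) + W2 A B (⇑τ ∘ ⇑sg124) - W2 A B (⇑τ ∘ ⇑sg125) - W3 A B (⇑τ ∘ ⇑sg50) + W3 A B (⇑τ ∘ ⇑sg121) + W3 A B (⇑τ ∘ ⇑sg122) - W3 A B (⇑τ ∘ ⇑sg123) - W3 A B (⇑τ ∘ ⇑sg124) + W3 A B (⇑τ ∘ ⇑sg125) - W4 A B (⇑τ ∘ ⇑sg126) + W4 A B (⇑τ ∘ ⇑sg127) + W5 A B (⇑τ ∘ ⇑sg126) - W6 A B (⇑τ ∘ ⇑sg126) - W5 A B (⇑τ ∘ ⇑sg127) + W6 A B (⇑τ ∘ ⇑sg127) + W4 A B (⇑τ ∘ ⇑sg128) - W4 A B (⇑τ ∘ ⇑sg129) - W5 A B (⇑τ ∘ ⇑sg128) + W6 A B (⇑τ ∘ ⇑sg128) + W5 A B (⇑τ ∘ ⇑sg129)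 - W6 A B (⇑τ ∘ ⇑sg129) + W4 A B (⇑τ ∘ ⇑sg130) - W4 A B (⇑τ ∘ ⇑sg131) - W5 A B (⇑τ ∘ ⇑sg130) + W6 A B (⇑τ ∘ ⇑sg130) + W5 A B (⇑τ ∘ ⇑sg131) - W6 A B (⇑τ ∘ ⇑sg131) - W4 A B (⇑τ ∘ ⇑sg132) + W4 A B (⇑τ ∘ ⇑sg133) + W5 A B (⇑τ ∘ ⇑sg132) - W6 A B (⇑τ ∘ ⇑sg132) - W5 A B (⇑τ ∘ ⇑sg133) + W6 A B (⇑τ ∘ ⇑sg133) - W4 A B (⇑τ ∘ ⇑sg134) + W4 A B (⇑τ ∘ ⇑sg135) + W5 A B (⇑τ ∘ ⇑sg134) - W6 A B (⇑τ ∘ ⇑sg134) - W5 A B (⇑τ ∘ ⇑sg135) + W6 A B (⇑τ ∘ ⇑sg135) + W4 A B (⇑τ ∘ ⇑sg70) - W4 A B (⇑τ ∘ ⇑sg71) - W5 A B (⇑τ ∘ ⇑sg70) + W6 A B (⇑τ ∘ ⇑sg70) + W5 A B (⇑τ ∘ ⇑sg71) - W6 A B (⇑τ ∘ ⇑sg71)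 := by
    intro τ
    rw [expandR A (B (τ 0)) (B (τ 1)) (B (τ 2)) (B (τ 3)) (B (τ 4)) (B (τ 5))]
    simp only [W0, W1, W2, W3, W4, W5, W6, Function.comp_apply, sg0_a0, sg0_a1, sg0_a2, sg0_a3, sg0_a4, sg0_a5, sg100_a0, sg100_a1, sg100_a2, sg100_a3, sg100_a4, sg100_a5, sg101_a0, sg101_a1, sg101_a2, sg101_a3, sg101_a4, sg101_a5, sg102_a0, sg102_a1, sg102_a2, sg102_a3, sg102_a4, sg102_a5, sg103_a0, sg103_a1, sg103_a2, sg103_a3, sg103_a4, sg103_a5, sg104_a0, sg104_a1, sg104_a2, sg104_a3, sg104_a4, sg104_a5, sg105_a0, sg105_a1, sg105_a2, sg105_a3, sg105_a4, sg105_a5, sg106_a0, sg106_a1, sg106_a2, sg106_a3, sg106_a4, sg106_a5, sg107_a0, sg107_a1, sg107_a2, sg107_a3, sg107_a4, sg107_a5, sg108_a0, sg108_a1, sg108_a2, sg108_a3, sg108_a4, sg108_a5, sg109_a0, sg109_a1, sg109_a2, sg109_a3, sg109_a4, sg109_a5, sg110_a0, sg110_a1, sg110_a2, sg110_a3, sg110_a4,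 sg110_a5, sg111_a0, sg111_a1, sg111_a2, sg111_a3, sg111_a4, sg111_a5, sg112_a0, sg112_a1, sg112_a2, sg112_a3, sg112_a4, sg112_a5, sg113_a0, sg113_a1, sg113_a2, sg113_a3, sg113_a4, sg113_a5, sg114_a0, sg114_a1, sg114_a2, sg114_a3, sg114_a4, sg114_a5, sg115_a0, sg115_a1, sg115_a2, sg115_a3, sg115_a4, sg115_a5, sg116_a0, sg116_a1, sg116_a2, sg116_a3, sg116_a4, sg116_a5, sg117_a0, sg117_a1, sg117_a2, sg117_a3, sg117_a4, sg117_a5, sg118_a0, sg118_a1, sg118_a2, sg118_a3, sg118_a4, sg118_a5, sg119_a0, sg119_a1, sg119_a2, sg119_a3, sg119_a4, sg119_a5, sg120_a0, sg120_a1, sg120_a2, sg120_a3, sg120_a4, sg120_a5, sg121_a0, sg121_a1, sg121_a2, sg121_a3, sg121_a4, sg121_a5, sg122_a0, sg122_a1, sg122_a2, sg122_a3, sg122_a4, sg122_a5, sg123_a0, sg123_a1, sg123_a2, sg123_a3, sg123_a4, sg123_a5, sg124_a0, sg124_a1, sg124_a2, sg124_a3, sg124_a4, sg124_a5, sg125_a0,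 sg125_a1, sg125_a2, sg125_a3, sg125_a4, sg125_a5, sg126_a0, sg126_a1, sg126_a2, sg126_a3, sg126_a4, sg126_a5, sg127_a0, sg127_a1, sg127_a2, sg127_a3, sg127_a4, sg127_a5, sg128_a0, sg128_a1, sg128_a2, sg128_a3, sg128_a4, sg128_a5, sg129_a0, sg129_a1, sg129_a2, sg129_a3, sg129_a4, sg129_a5, sg130_a0, sg130_a1, sg130_a2, sg130_a3, sg130_a4, sg130_a5, sg131_a0, sg131_a1, sg131_a2, sg131_a3, sg131_a4, sg131_a5, sg132_a0, sg132_a1, sg132_a2, sg132_a3, sg132_a4, sg132_a5, sg133_a0, sg133_a1, sg133_a2, sg133_a3, sg133_a4, sg133_a5, sg134_a0, sg134_a1, sg134_a2, sg134_a3, sg134_a4, sg134_a5, sg135_a0, sg135_a1, sg135_a2, sg135_a3, sg135_a4, sg135_a5, sg2_a0, sg2_a1, sg2_a2, sg2_a3, sg2_a4, sg2_a5, sg34_a0, sg34_a1, sg34_a2, sg34_a3, sg34_a4, sg34_a5, sg35_a0, sg35_a1, sg35_a2, sg35_a3, sg35_a4, sg35_a5, sg48_a0, sg48_a1, sg48_a2,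 sg48_a3, sg48_a4, sg48_a5, sg50_a0, sg50_a1, sg50_a2, sg50_a3, sg50_a4, sg50_a5, sg70_a0, sg70_a1, sg70_a2, sg70_a3, sg70_a4, sg70_a5, sg71_a0, sg71_a1, sg71_a2, sg71_a3, sg71_a4, sg71_a5, sg72_a0, sg72_a1, sg72_a2, sg72_a3, sg72_a4, sg72_a5, sg73_a0, sg73_a1, sg73_a2, sg73_a3, sg73_a4, sg73_a5, sg74_a0, sg74_a1, sg74_a2, sg74_a3, sg74_a4, sg74_a5, sg75_a0, sg75_a1, sg75_a2, sg75_a3, sg75_a4, sg75_a5, sg76_a0, sg76_a1, sg76_a2, sg76_a3, sg76_a4, sg76_a5, sg77_a0, sg77_a1, sg77_a2, sg77_a3, sg77_a4, sg77_a5, sg78_a0, sg78_a1, sg78_a2, sg78_a3, sg78_a4, sg78_a5, sg79_a0, sg79_a1, sg79_a2, sg79_a3, sg79_a4, sg79_a5, sg80_a0, sg80_a1, sg80_a2, sg80_a3, sg80_a4, sg80_a5, sg81_a0, sg81_a1, sg81_a2, sg81_a3, sg81_a4, sg81_a5, sg82_a0, sg82_a1, sg82_a2, sg82_a3, sg82_a4,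 sg82_a5, sg83_a0, sg83_a1, sg83_a2, sg83_a3, sg83_a4, sg83_a5, sg84_a0, sg84_a1, sg84_a2, sg84_a3, sg84_a4, sg84_a5, sg85_a0, sg85_a1, sg85_a2, sg85_a3, sg85_a4, sg85_a5, sg86_a0, sg86_a1, sg86_a2, sg86_a3, sg86_a4, sg86_a5, sg87_a0, sg87_a1, sg87_a2, sg87_a3, sg87_a4, sg87_a5, sg88_a0, sg88_a1, sg88_a2, sg88_a3, sg88_a4, sg88_a5, sg89_a0, sg89_a1, sg89_a2, sg89_a3, sg89_a4, sg89_a5, sg90_a0, sg90_a1, sg90_a2, sg90_a3, sg90_a4, sg90_a5, sg91_a0, sg91_a1, sg91_a2, sg91_a3, sg91_a4, sg91_a5, sg92_a0, sg92_a1, sg92_a2, sg92_a3, sg92_a4, sg92_a5, sg93_a0, sg93_a1, sg93_a2, sg93_a3, sg93_a4, sg93_a5, sg94_a0, sg94_a1, sg94_a2, sg94_a3, sg94_a4, sg94_a5, sg95_a0, sg95_a1, sg95_a2, sg95_a3, sg95_a4, sg95_a5, sg96_a0, sg96_a1, sg96_a2, sg96_a3, sg96_a4, sg96_a5, sg97_a0,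 sg97_a1, sg97_a2, sg97_a3, sg97_a4, sg97_a5, sg98_a0, sg98_a1, sg98_a2, sg98_a3, sg98_a4, sg98_a5, sg99_a0, sg99_a1, sg99_a2, sg99_a3, sg99_a4, sg99_a5]
  simp only [hexpL, hexpR]
  simp (config := { maxSteps := 100000000 }) only [smul_add, smul_sub, smul_neg, Finset.sum_add_distrib, Finset.sum_sub_distrib]
  simp only [alt_comp]
  simp only [sg0_sign, sg1_sign, sg2_sign, sg3_sign, sg4_sign, sg5_sign, sg6_sign, sg7_sign, sg8_sign, sg9_sign, sg10_sign, sg11_sign, sg12_sign, sg13_sign, sg14_sign, sg15_sign, sg16_sign, sg17_sign, sg18_sign, sg19_sign, sg20_sign, sg21_sign, sg22_sign, sg23_sign, sg24_sign, sg25_sign, sg26_sign, sg27_sign, sg28_sign, sg29_sign, sg30_sign, sg31_sign, sg32_sign, sg33_sign, sg34_sign, sg35_sign, sg36_sign, sg37_sign, sg38_sign, sg39_sign, sg40_sign, sg41_sign, sg42_sign, sg43_sign, sg44_sign, sg45_sign, sg46_sign, sg47_sign, sg48_sign, sg49_sign, sg50_sign, sg51_sign, sg52_sign, sg53_sign, sg54_sign,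 sg55_sign, sg56_sign, sg57_sign, sg58_sign, sg59_sign, sg60_sign, sg61_sign, sg62_sign, sg63_sign, sg64_sign, sg65_sign, sg66_sign, sg67_sign, sg68_sign, sg69_sign, sg70_sign, sg71_sign, sg72_sign, sg73_sign, sg74_sign, sg75_sign, sg76_sign, sg77_sign, sg78_sign, sg79_sign, sg80_sign, sg81_sign, sg82_sign, sg83_sign, sg84_sign, sg85_sign, sg86_sign, sg87_sign, sg88_sign, sg89_sign, sg90_sign, sg91_sign, sg92_sign, sg93_sign, sg94_sign, sg95_sign, sg96_sign, sg97_sign, sg98_sign, sg99_sign, sg100_sign, sg101_sign, sg102_sign, sg103_sign, sg104_sign, sg105_sign, sg106_sign, sg107_sign, sg108_sign, sg109_sign, sg110_sign, sg111_sign, sg112_sign, sg113_sign, sg114_sign, sg115_sign, sg116_sign, sg117_sign, sg118_sign, sg119_sign, sg120_sign, sg121_sign, sg122_sign, sg123_sign, sg124_sign, sg125_sign, sg126_sign, sg127_sign, sg128_sign, sg129_sign, sg130_sign, sg131_sign, sg132_sign, sg133_sign, sg134_sign, sg135_sign]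
  abel
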